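/- arXiv:1510.00909 — 4 statements merged into one kernel-verified Lean document; each statement's English description precedes it below -/
import Mathlib

section
/- For m ≥ 2 and q₁,...,q_m ∈ [1,2] with Σ 1/qᵢ = (m+1)/2, any constant C satisfying the mixed-norm inequality with exponents (q₁,...,q_m) for all real m-linear forms on (ℓ∞ⁿ)^m satisfies C ≥ 2^{((m-1)q̂₂ + Σ_{i≠2}q̂ᵢ - (m-1)q₁⋯q_m)/(q₁⋯q_m)}, where q̂ᵢ = (q₁⋯q_m)/qᵢ. -/
/-- The iterated mixed `ℓ_{q₁}(ℓ_{q₂}(⋯ℓ_{q_m}))` norm of an `m`-indexed array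
`f` with indices ranging over `{0, ..., N-1}`:
`(Σ_{j₁<N}(⋯(Σ_{j_m<N}|f(j₁,...,j_m)|^{q_m})^{q_{m-1}/q_m}⋯)^{q₁/q₂})^{1/q₁}`. -/
noncomputable def mixedNorm : (m : ℕ) → (N : ℕ) → (ℕ → ℝ) → ((ℕ → ℕ) → ℝ) → ℝ
  | 0, _, _, f => |f fun _ => 0|
  | m + 1, N, q, f =>
      (∑ j : Fin N, (mixedNorm m N (fun i => q (i + 1))
          (fun idx => f (fun i => if i = 0 then (j : ℕ) else idx (i - 1)))) ^ q 0)
        ^ (1 / q 0)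

/-- The `j`-th canonical basis vector of `ℝⁿ` (interpreted as `0` if `j ≥ n`). -/
def eVec (n : ℕ) (j : ℕ) : Fin n → ℝ := fun i => if (i : ℕ) = j then 1 else 0

/-- The supremum norm of an `m`-linear form on `(ℓ∞ⁿ)^m`. -/
noncomputable def supNorm (m n : ℕ)
    (T : MultilinearMap ℝ (fun _ : Fin m => (Fin n → ℝ)) ℝ) : ℝ :=
  sSup {v : ℝ | ∃ x : Fin m → Fin n → ℝ, (∀ i, ‖x i‖ ≤ 1) ∧ v = |T x|}

/-- The shift exponents in the inductive definition of `T_m`. -/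
def Tshift (m k : ℕ) : ℕ := if k ≤ 1 then 2 ^ (m - 1) else 2 ^ (m - k)

/-- The inductively defined `m`-linear forms `T_m` of Diniz et al.:
`T₂(x,y) = x₁y₁ + x₁y₂ + x₂y₁ - x₂y₂` and
`T_{m+1}(x⁽¹⁾,...,x⁽ᵐ⁺¹⁾) = (x₁⁽ᵐ⁺¹⁾+x₂⁽ᵐ⁺¹⁾)T_m(x⁽¹⁾,...,x⁽ᵐ⁾)
  + (x₁⁽ᵐ⁺¹⁾-x₂⁽ᵐ⁺¹⁾)T_m(B^{2^{m-1}}x⁽¹⁾, B^{2^{m-1}}x⁽²⁾, B^{2^{m-2}}x⁽³⁾, ..., B²x⁽ᵐ⁾)`,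
where `B` is the backward shift. The `k`-th argument (0-indexed) is `x k : ℕ → ℝ`. -/
noncomputable def Tform : ℕ → (ℕ → ℕ → ℝ) → ℝ
  | 0, _ => 0
  | 1, x => x 0 0
  | 2, x => x 0 0 * x 1 0 + x 0 0 * x 1 1 + x 0 1 * x 1 0 - x 0 1 * x 1 1
  | m + 3, x =>
      (x (m + 2) 0 + x (m + 2) 1) * Tform (m + 2) x
        + (x (m + 2) 0 - x (m + 2) 1)
            * Tform (m + 2) (fun k j => x k (j + Tshift (m + 2) k))


theorem Tform_congr : ∀ (m : ℕ) (x y : ℕ → ℕ → ℝ), (∀ k, k < m → x k = y k) →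
    Tform m x = Tform m y
  | 0, _, _, _ => rfl
  | 1, x, y, h => by simp only [Tform]; rw [h 0 (by norm_num)]
  | 2, x, y, h => by simp only [Tform]; rw [h 0 (by norm_num), h 1 (by norm_num)]
  | (m+3), x, y, h => by
      simp only [Tform]
      rw [h (m+2) (by omega),
        Tform_congr (m+2) x y (fun k hk => h k (by omega)),
        Tform_congr (m+2) (fun k j => x k (j + Tshift (m+2) k))
          (fun k j => y k (j + Tshift (m+2) k))
          (fun k hk => by simp only [h k (by omega)])]

theorem update_shift (x : ℕ → ℕ → ℝ) (k : ℕ) (c : ℕ → ℝ) (s : ℕ → ℕ) :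
    (fun k' j => Function.update x k c k' (j + s k')) =
      Function.update (fun k' j => x k' (j + s k')) k (fun j => c (j + s k)) := by
  funext k' j
  rcases eq_or_ne k' k with rfl | h
  · simp
  · simp [Function.update_of_ne h]

theorem Tform_update_add : ∀ (m : ℕ) (x : ℕ → ℕ → ℝ) (k : ℕ), k < m → ∀ (a b : ℕ → ℝ),
    Tform m (Function.update x k (a + b)) =
      Tform m (Function.update x k a) + Tform m (Function.update x k b)
  | 0, _, _, h, _, _ => absurd h (by omega)
  | 1, x, k, h, a, b => by
      have : k = 0 := by omega
      subst this
      simp [Tform]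
  | 2, x, k, h, a, b => by
      interval_cases k <;> simp [Tform, Function.update] <;> ring
  | (m+3), x, k, h, a, b => by
      simp only [Tform, update_shift]
      rcases eq_or_ne k (m+2) with rfl | hk
      · rw [Tform_congr (m+2) (Function.update x (m+2) (a+b)) x
            (fun k' hk' => Function.update_of_ne (by omega) _ _),
          Tform_congr (m+2) (Function.update x (m+2) a) x
            (fun k' hk' => Function.update_of_ne (by omega) _ _),
          Tform_congr (m+2) (Function.update x (m+2) b) x
            (fun k' hk' => Function.update_of_ne (by omega) _ _),
          Tform_congr (m+2) (Function.update (fun k' j => x k' (j + Tshift (m+2) k')) (m+2) _)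
            (fun k' j => x k' (j + Tshift (m+2) k'))
            (fun k' hk' => Function.update_of_ne (by omega) _ _),
          Tform_congr (m+2) (Function.update (fun k' j => x k' (j + Tshift (m+2) k')) (m+2)
              (fun j => a (j + Tshift (m+2) (m+2))))
            (fun k' j => x k' (j + Tshift (m+2) k'))
            (fun k' hk' => Function.update_of_ne (by omega) _ _),
          Tform_congr (m+2) (Function.update (fun k' j => x k' (j + Tshift (m+2) k')) (m+2)
              (fun j => b (j + Tshift (m+2) (m+2))))
            (fun k' j => x k' (j + Tshift (m+2) k'))
            (fun k' hk' => Function.update_of_ne (by omega) _ _)]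
        simp only [Function.update_self, Pi.add_apply]
        ring
      · have hklt : k < m + 2 := by omega
        have hab : (fun j => (a + b) (j + Tshift (m+2) k)) =
            (fun j => a (j + Tshift (m+2) k)) + (fun j => b (j + Tshift (m+2) k)) := by
          funext j; simp
        simp only [Function.update_of_ne (Ne.symm hk)]
        rw [Tform_update_add (m+2) x k hklt a b, hab,
          Tform_update_add (m+2) (fun k' j => x k' (j + Tshift (m+2) k')) k hklt _ _]
        ring

theorem Tform_update_smul : ∀ (m : ℕ) (x : ℕ → ℕ → ℝ) (k : ℕ), k < m → ∀ (c : ℝ) (a : ℕ → ℝ),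
    Tform m (Function.update x k (c • a)) = c * Tform m (Function.update x k a)
  | 0, _, _, h, _, _ => absurd h (by omega)
  | 1, x, k, h, c, a => by
      have : k = 0 := by omega
      subst this
      simp [Tform]
  | 2, x, k, h, c, a => by
      interval_cases k <;> simp [Tform, Function.update] <;> ring
  | (m+3), x, k, h, c, a => by
      simp only [Tform, update_shift]
      rcases eq_or_ne k (m+2) with rfl | hk
      · rw [Tform_congr (m+2) (Function.update x (m+2) (c • a)) x
            (fun k' hk' => Function.update_of_ne (by omega) _ _),
          Tform_congr (m+2) (Function.update x (m+2) a) x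
            (fun k' hk' => Function.update_of_ne (by omega) _ _),
          Tform_congr (m+2) (Function.update (fun k' j => x k' (j + Tshift (m+2) k')) (m+2)
              (fun j => (c • a) (j + Tshift (m+2) (m+2))))
            (fun k' j => x k' (j + Tshift (m+2) k'))
            (fun k' hk' => Function.update_of_ne (by omega) _ _),
          Tform_congr (m+2) (Function.update (fun k' j => x k' (j + Tshift (m+2) k')) (m+2)
              (fun j => a (j + Tshift (m+2) (m+2))))
            (fun k' j => x k' (j + Tshift (m+2) k'))
            (fun k' hk' => Function.update_of_ne (by omega) _ _)]
        simp only [Function.update_self, Pi.smul_apply, smul_eq_mul]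
        ring
      · have hklt : k < m + 2 := by omega
        have hca : (fun j => (c • a) (j + Tshift (m+2) k)) =
            c • (fun j => a (j + Tshift (m+2) k)) := by
          funext j; simp
        simp only [Function.update_of_ne (Ne.symm hk)]
        rw [Tform_update_smul (m+2) x k hklt c a, hca,
          Tform_update_smul (m+2) (fun k' j => x k' (j + Tshift (m+2) k')) k hklt _ _]
        ring

theorem Tform_zero (m k : ℕ) (hk : k < m) (x : ℕ → ℕ → ℝ) (hx : ∀ j, x k j = 0) :
    Tform m x = 0 := by
  have h1 : Tform m x = Tform m (Function.update x k ((0:ℝ) • (fun _ => (0:ℝ)))) := by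
    apply Tform_congr
    intro k' _
    rcases eq_or_ne k' k with rfl | h
    · rw [Function.update_self]; funext j; simp [hx j]
    · rw [Function.update_of_ne h]
  rw [h1, Tform_update_smul m x k hk 0 _, zero_mul]

theorem abs_pm (c d : ℝ) (hc : |c| ≤ 1) (hd : |d| ≤ 1) : |c + d| + |c - d| ≤ 2 := by
  have hc' := abs_le.mp hc
  have hd' := abs_le.mp hd
  rcases abs_cases (c + d) with ⟨h1, _⟩ | ⟨h1, _⟩ <;>
    rcases abs_cases (c - d) with ⟨h2, _⟩ | ⟨h2, _⟩ <;> rw [h1, h2] <;> linarith [hc'.1, hc'.2, hd'.1, hd'.2]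

theorem Tform_bound : ∀ (m : ℕ) (x : ℕ → ℕ → ℝ), (∀ k j, |x k j| ≤ 1) →
    |Tform m x| ≤ 2 ^ (m - 1)
  | 0, x, h => by simp [Tform]
  | 1, x, h => by simpa [Tform] using h 0 0
  | 2, x, h => by
      have e1 : Tform 2 x = x 0 0 * (x 1 0 + x 1 1) + x 0 1 * (x 1 0 - x 1 1) := by
        simp only [Tform]; ring
      rw [e1]
      calc |x 0 0 * (x 1 0 + x 1 1) + x 0 1 * (x 1 0 - x 1 1)|
          ≤ |x 0 0 * (x 1 0 + x 1 1)| + |x 0 1 * (x 1 0 - x 1 1)| := abs_add_le _ _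
        _ = |x 0 0| * |x 1 0 + x 1 1| + |x 0 1| * |x 1 0 - x 1 1| := by rw [abs_mul, abs_mul]
        _ ≤ 1 * |x 1 0 + x 1 1| + 1 * |x 1 0 - x 1 1| := by
            gcongr <;> [exact h 0 0; exact h 0 1]
        _ = |x 1 0 + x 1 1| + |x 1 0 - x 1 1| := by ring
        _ ≤ 2 := abs_pm _ _ (h 1 0) (h 1 1)
        _ = 2 ^ (2 - 1) := by norm_num
  | (m+3), x, h => by
      have hA := Tform_bound (m+2) x h
      have hB := Tform_bound (m+2) (fun k j => x k (j + Tshift (m+2) k)) (fun k j => h k _)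
      have h21 : m + 2 - 1 = m + 1 := rfl
      rw [h21] at hA hB
      show |Tform (m+3) x| ≤ 2 ^ (m+2)
      have key := abs_pm (x (m+2) 0) (x (m+2) 1) (h (m+2) 0) (h (m+2) 1)
      have hTnn : (0:ℝ) ≤ 2 ^ (m+1) := by positivity
      calc |Tform (m+3) x|
          ≤ |(x (m+2) 0 + x (m+2) 1) * Tform (m+2) x|
            + |(x (m+2) 0 - x (m+2) 1) * Tform (m+2) (fun k j => x k (j + Tshift (m+2) k))| := by
            simp only [Tform]; exact abs_add_le _ _
        _ = |x (m+2) 0 + x (m+2) 1| * |Tform (m+2) x|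
            + |x (m+2) 0 - x (m+2) 1| * |Tform (m+2) (fun k j => x k (j + Tshift (m+2) k))| := by
            rw [abs_mul, abs_mul]
        _ ≤ |x (m+2) 0 + x (m+2) 1| * 2 ^ (m+1) + |x (m+2) 0 - x (m+2) 1| * 2 ^ (m+1) := by
            gcongr
        _ = (|x (m+2) 0 + x (m+2) 1| + |x (m+2) 0 - x (m+2) 1|) * 2 ^ (m+1) := by ring
        _ ≤ 2 * 2 ^ (m+1) := by gcongr
        _ = 2 ^ (m+2) := by ring

theorem subdiv (a t c : ℕ) (hc : 0 < c) : (a - c * t)/c = a/c - t := by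
  rcases le_or_gt (c*t) a with h | h
  · obtain ⟨d, rfl⟩ := Nat.exists_eq_add_of_le h
    rw [Nat.add_sub_cancel_left, Nat.mul_add_div hc, Nat.add_sub_cancel_left]
  · have h1 : a - c*t = 0 := by omega
    have h2 : a / c ≤ t := by
      rw [Nat.div_le_iff_le_mul_add_pred hc]
      nlinarith
    rw [h1, Nat.zero_div]
    omega

theorem tshift0 (r : ℕ) : Tshift (r+2) 0 = 2^(r+1) := by simp [Tshift]

theorem tshiftk (r k : ℕ) (hk : 1 ≤ k) (hk2 : k ≤ r+1) : Tshift (r+2) k = 2 * 2^(r+1-k) := by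
  by_cases h1 : k ≤ 1
  · have : k = 1 := by omega
    subst this
    show (if (1:ℕ) ≤ 1 then 2^(r+2-1) else 2^(r+2-1)) = _
    simp only [if_pos (le_refl 1)]
    rw [show r+2-1 = r+1 from rfl, show r+1-1 = r from rfl, pow_succ, mul_comm]
  · have h2 : 2 ≤ k := by omega
    simp only [Tshift, if_neg (by omega : ¬ k ≤ 1)]
    rw [show r+2-k = (r+1-k)+1 by omega, pow_succ, mul_comm]

theorem keyD (r : ℕ) (j : ℕ → ℕ) (hjm : j (r+2) ≤ 1) :
    (j 0 < 2^(r+2) ∧ ∀ k, 0 < k → k < r+3 → j k / 2 = j 0 / 2^k)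
    ↔ ((j 0 < 2^(r+1) ∧ ∀ k, 0 < k → k < r+2 → j k / 2 = j 0 / 2^k)
      ∨ ((∀ k, k < r+2 → Tshift (r+2) k ≤ j k) ∧
         (j 0 - Tshift (r+2) 0 < 2^(r+1) ∧ ∀ k, 0 < k → k < r+2 →
            (j k - Tshift (r+2) k) / 2 = (j 0 - Tshift (r+2) 0) / 2^k))) := by
  have p22 : (2:ℕ)^(r+2) = 2*2^(r+1) := by rw [pow_succ]; ring
  constructor
  · rintro ⟨hb, hd⟩
    rcases lt_or_ge (j 0) (2^(r+1)) with h0 | h0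
    · exact Or.inl ⟨h0, fun k hk hk2 => hd k hk (by omega)⟩
    · right
      have hdiv : ∀ k, 0 < k → k < r+2 →
          (j k - Tshift (r+2) k)/2 = (j 0 - 2^(r+1))/2^k ∧ Tshift (r+2) k ≤ j k := by
        intro k hk hk2
        have ht := tshiftk r k hk (by omega)
        set t := 2^(r+1-k) with htdef
        have f2 : (2:ℕ)^(r+1) = 2^k * t := by rw [htdef, ← pow_add]; congr 1; omega
        have hjk : j k / 2 = j 0 / 2^k := hd k hk (by omega)
        have f5 : t ≤ j 0 / 2^k := by
          rw [Nat.le_div_iff_mul_le (by positivity)]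
          calc t * 2^k = 2^k * t := mul_comm _ _
            _ = 2^(r+1) := f2.symm
            _ ≤ j 0 := h0
        have f6 : t ≤ j k / 2 := by rw [hjk]; exact f5
        have hd2 : j k / 2 * 2 ≤ j k := Nat.div_mul_le_self _ _
        have hsle : 2 * t ≤ j k := by omega
        constructor
        · rw [ht]
          have f3 : (j k - 2*t)/2 = j k/2 - t := subdiv (j k) t 2 (by norm_num)
          have f4 : (j 0 - 2^(r+1))/2^k = j 0/2^k - t := by
            rw [f2]; exact subdiv (j 0) t (2^k) (by positivity)
          rw [f3, f4, hjk]
        · rw [ht]; exact hsle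
      refine ⟨?_, ?_, fun k hk hk2 => by rw [tshift0]; exact (hdiv k hk hk2).1⟩
      · intro k hk
        rcases Nat.eq_zero_or_pos k with rfl | hkp
        · rw [tshift0]; exact h0
        · exact (hdiv k hkp hk).2
      · rw [tshift0]; omega
  · rintro (⟨hb, hd⟩ | ⟨hs, hb, hd⟩)
    · have hbb : j 0 < 2^(r+2) := by omega
      refine ⟨hbb, fun k hk hk2 => ?_⟩
      rcases lt_or_ge k (r+2) with h | h
      · exact hd k hk h
      · have hkr : k = r+2 := by omega
        subst hkr
        rw [Nat.div_eq_of_lt (by omega), Nat.div_eq_of_lt hbb]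
    · have h0 : 2^(r+1) ≤ j 0 := by have := hs 0 (by omega); rwa [tshift0] at this
      rw [tshift0] at hb
      have hbb : j 0 < 2^(r+2) := by omega
      refine ⟨hbb, fun k hk hk2 => ?_⟩
      rcases lt_or_ge k (r+2) with h | h
      · have ht := tshiftk r k hk (by omega)
        set t := 2^(r+1-k) with htdef
        have f2 : (2:ℕ)^(r+1) = 2^k * t := by rw [htdef, ← pow_add]; congr 1; omega
        have hski := hs k h
        rw [ht] at hski
        have hde := hd k hk h
        rw [ht, tshift0] at hde
        have f3 : (j k - 2*t)/2 = j k/2 - t := subdiv (j k) t 2 (by norm_num)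
        have f4 : (j 0 - 2^(r+1))/2^k = j 0/2^k - t := by
          rw [f2]; exact subdiv (j 0) t (2^k) (by positivity)
        rw [f3, f4] at hde
        have f5 : t ≤ j 0 / 2^k := by
          rw [Nat.le_div_iff_mul_le (by positivity)]
          calc t * 2^k = 2^k * t := mul_comm _ _
            _ ≤ j 0 := f2 ▸ h0
        have f6 : t ≤ j k / 2 := by
          rw [Nat.le_div_iff_mul_le (by norm_num)]
          omega
        omega
      · have hkr : k = r+2 := by omega
        subst hkr
        rw [Nat.div_eq_of_lt (by omega), Nat.div_eq_of_lt hbb]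

noncomputable def eF (j : ℕ) : ℕ → ℝ := fun i => if i = j then 1 else 0


theorem ind_add (P Q : Prop) [Decidable P] [Decidable Q] [Decidable (P ∨ Q)] (h : ¬(P ∧ Q)) :
    (if P then (1:ℝ) else 0) + (if Q then 1 else 0) = if P ∨ Q then 1 else 0 := by
  by_cases hP : P <;> by_cases hQ : Q <;> simp [hP, hQ] <;> tauto

open Classical in
theorem Tform_e (m : ℕ) (hm : 2 ≤ m) : ∀ j : ℕ → ℕ,
    |Tform m (fun k => eF (j k))| =
      if j 0 < 2^(m-1) ∧ (∀ k, 0 < k → k < m → j k / 2 = j 0 / 2^k) then 1 else 0 := by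
  induction m, hm using Nat.le_induction with
  | base =>
    intro j
    have hiff : (j 0 < 2^(2-1) ∧ ∀ k, 0 < k → k < 2 → j k / 2 = j 0 / 2^k)
        ↔ (j 0 < 2 ∧ j 1 < 2) := by
      constructor
      · rintro ⟨h1, h2⟩
        have h3 := h2 1 (by omega) (by omega)
        rw [pow_one] at h3
        rw [show (2:ℕ)^(2-1) = 2 from rfl] at h1
        omega
      · rintro ⟨h1, h2⟩
        refine ⟨by rw [show (2:ℕ)^(2-1) = 2 from rfl]; omega, ?_⟩
        intro k hk hk2
        have hk1 : k = 1 := by omega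
        subst hk1
        rw [pow_one]
        omega
    rw [if_congr hiff rfl rfl]
    by_cases h0 : j 0 < 2
    · by_cases h1 : j 1 < 2
      · rw [if_pos ⟨h0, h1⟩]
        rcases (by omega : j 0 = 0 ∨ j 0 = 1) with h | h <;>
          rcases (by omega : j 1 = 0 ∨ j 1 = 1) with h' | h' <;>
          simp [Tform, eF, h, h']
      · rw [if_neg (by tauto)]
        have e1 : ∀ i, i ≤ 1 → eF (j 1) i = 0 := by
          intro i hi
          simp only [eF]
          rw [if_neg (by omega)]
        simp [Tform, e1 0 (by omega), e1 1 (by omega)]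
    · rw [if_neg (by tauto)]
      have e1 : ∀ i, i ≤ 1 → eF (j 0) i = 0 := by
        intro i hi
        simp only [eF]
        rw [if_neg (by omega)]
      simp [Tform, e1 0 (by omega), e1 1 (by omega)]
  | succ m hm ih =>
    obtain ⟨r, rfl⟩ : ∃ r, m = r + 2 := ⟨m - 2, by omega⟩
    intro j
    have hrec : Tform (r+3) (fun k => eF (j k)) =
        (eF (j (r+2)) 0 + eF (j (r+2)) 1) * Tform (r+2) (fun k => eF (j k))
        + (eF (j (r+2)) 0 - eF (j (r+2)) 1)
            * Tform (r+2) (fun k i => eF (j k) (i + Tshift (r+2) k)) := by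
      simp only [Tform]
    have hred2 : r + 2 - 1 = r + 1 := rfl
    have hred3 : r + 3 - 1 = r + 2 := rfl
    have hA := ih j
    rw [hred2] at hA
    set T := Tform (r+2) (fun k => eF (j k)) with hTdef
    set B := Tform (r+2) (fun k i => eF (j k) (i + Tshift (r+2) k)) with hBdef
    have hB : |B| = if ((∀ k, k < r+2 → Tshift (r+2) k ≤ j k) ∧
        (j 0 - Tshift (r+2) 0 < 2^(r+1) ∧ ∀ k, 0 < k → k < r+2 →
          (j k - Tshift (r+2) k) / 2 = (j 0 - Tshift (r+2) 0) / 2^k)) then 1 else 0 := by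
      by_cases hsh : ∀ k, k < r+2 → Tshift (r+2) k ≤ j k
      · have hBe : B = Tform (r+2) (fun k => eF (j k - Tshift (r+2) k)) := by
          rw [hBdef]
          apply Tform_congr
          intro k hk
          funext i
          have hski := hsh k hk
          simp only [eF]
          rw [if_congr (by omega : (i + Tshift (r+2) k = j k) ↔ (i = j k - Tshift (r+2) k)) rfl rfl]
        rw [hBe]
        have h2 := ih (fun k => j k - Tshift (r+2) k)
        rw [hred2] at h2
        rw [h2]
        exact if_congr (Iff.intro (fun h => ⟨hsh, h⟩) (fun h => h.2)) rfl rfl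
      · rw [if_neg (by tauto)]
        push_neg at hsh
        obtain ⟨k0, hk0, hk0'⟩ := hsh
        have hB0 : B = 0 := by
          rw [hBdef]
          apply Tform_zero (r+2) k0 hk0
          intro i
          simp only [eF]
          rw [if_neg (by omega)]
        rw [hB0, abs_zero]
    have hkey := keyD r j
    have hex : ¬((j 0 < 2^(r+1) ∧ ∀ k, 0 < k → k < r+2 → j k / 2 = j 0 / 2^k) ∧
        ((∀ k, k < r+2 → Tshift (r+2) k ≤ j k) ∧
        (j 0 - Tshift (r+2) 0 < 2^(r+1) ∧ ∀ k, 0 < k → k < r+2 →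
          (j k - Tshift (r+2) k) / 2 = (j 0 - Tshift (r+2) 0) / 2^k))) := by
      rintro ⟨⟨hb1, -⟩, ⟨hs2, -⟩⟩
      have := hs2 0 (by omega)
      rw [tshift0] at this
      omega
    rw [hred3]
    rcases (by omega : j (r+2) = 0 ∨ j (r+2) = 1 ∨ 2 ≤ j (r+2)) with hv | hv | hv
    · have hc0 : eF (j (r+2)) 0 = 1 := by simp [eF, hv]
      have hc1 : eF (j (r+2)) 1 = 0 := by simp [eF, hv]
      rw [hrec, hc0, hc1]
      have hval : (1 + 0) * T + (1 - 0) * B = T + B := by ring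
      rw [hval]
      have habs : |T + B| = |T| + |B| := by
        by_cases h1 : (j 0 < 2^(r+1) ∧ ∀ k, 0 < k → k < r+2 → j k / 2 = j 0 / 2^k)
        · have hB0 : B = 0 := abs_eq_zero.mp (by rw [hB, if_neg (fun h2 => hex ⟨h1, h2⟩)])
          rw [hB0, abs_zero, add_zero, add_zero]
        · have hT0 : T = 0 := abs_eq_zero.mp (by rw [hA, if_neg h1])
          rw [hT0, abs_zero, zero_add, zero_add]
      rw [habs, hA, hB]
      rw [if_congr (hkey (by omega)) rfl rfl]
      exact ind_add _ _ hex
    · have hc0 : eF (j (r+2)) 0 = 0 := by simp [eF, hv]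
      have hc1 : eF (j (r+2)) 1 = 1 := by simp [eF, hv]
      rw [hrec, hc0, hc1]
      have hval : (0 + 1) * T + (0 - 1) * B = T - B := by ring
      rw [hval]
      have habs : |T - B| = |T| + |B| := by
        by_cases h1 : (j 0 < 2^(r+1) ∧ ∀ k, 0 < k → k < r+2 → j k / 2 = j 0 / 2^k)
        · have hB0 : B = 0 := abs_eq_zero.mp (by rw [hB, if_neg (fun h2 => hex ⟨h1, h2⟩)])
          rw [hB0, abs_zero, add_zero, sub_zero]
        · have hT0 : T = 0 := abs_eq_zero.mp (by rw [hA, if_neg h1])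
          rw [hT0, abs_zero, zero_add, zero_sub, abs_neg]
      rw [habs, hA, hB]
      rw [if_congr (hkey (by omega)) rfl rfl]
      exact ind_add _ _ hex
    · have hc0 : eF (j (r+2)) 0 = 0 := by
        simp only [eF]; rw [if_neg (by omega)]
      have hc1 : eF (j (r+2)) 1 = 0 := by
        simp only [eF]; rw [if_neg (by omega)]
      rw [hrec, hc0, hc1]
      rw [if_neg ?_]
      · norm_num
      · rintro ⟨hb, hd⟩
        have := hd (r+2) (by omega) (by omega)
        rw [Nat.div_eq_of_lt hb] at this
        omega

theorem mixedNorm_nonneg : ∀ (m N : ℕ) (q : ℕ → ℝ) (f : (ℕ → ℕ) → ℝ),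
    0 ≤ mixedNorm m N q f
  | 0, _, _, f => abs_nonneg _
  | (m+1), N, q, f =>
    Real.rpow_nonneg
      (Finset.sum_nonneg fun j _ => Real.rpow_nonneg (mixedNorm_nonneg m N _ _) _) _

theorem mixedNorm_zero : ∀ (m N : ℕ) (q : ℕ → ℝ), (∀ k, k < m → q k ≠ 0) →
    ∀ (f : (ℕ → ℕ) → ℝ), (∀ idx, f idx = 0) → mixedNorm m N q f = 0
  | 0, _, _, _, f, hf => by simp [mixedNorm, hf]
  | (m+1), N, q, hq, f, hf => by
    simp only [mixedNorm]
    have h1 : ∀ j : Fin N,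
        (mixedNorm m N (fun i => q (i+1))
          (fun idx => f (fun i => if i = 0 then (j:ℕ) else idx (i-1)))) ^ q 0 = 0 := by
      intro j
      rw [mixedNorm_zero m N _ (fun k hk => hq (k+1) (by omega)) _ (fun idx => hf _)]
      exact Real.zero_rpow (hq 0 (by omega))
    rw [Finset.sum_congr rfl (fun j _ => h1 j), Finset.sum_const, smul_zero]
    exact Real.zero_rpow (one_div_ne_zero (hq 0 (by omega)))

theorem sum_ind (N t : ℕ) (c : ℝ) (h : 2*t+1 < N) :
    ∑ j : Fin N, (if (j:ℕ)/2 = t then c else 0) = 2*c := by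
  rw [← Finset.sum_filter]
  have hset : (Finset.univ.filter (fun j : Fin N => (j:ℕ)/2 = t)) =
      {(⟨2*t, by omega⟩ : Fin N), ⟨2*t+1, by omega⟩} := by
    ext j
    simp only [Finset.mem_filter, Finset.mem_univ, true_and, Finset.mem_insert,
      Finset.mem_singleton, Fin.ext_iff]
    omega
  rw [hset, Finset.sum_insert (by simp [Fin.ext_iff]), Finset.sum_singleton]
  ring

open Classical in
theorem mixedNorm_ind : ∀ (r N : ℕ) (q : ℕ → ℝ) (t : ℕ → ℕ) (f : (ℕ → ℕ) → ℝ),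
    (∀ k, k < r → 0 < q k) → (∀ k, k < r → 2 * t k + 1 < N) →
    (∀ idx, |f idx| = if (∀ k, k < r → idx k / 2 = t k) then 1 else 0) →
    mixedNorm r N q f = ∏ k ∈ Finset.range r, (2:ℝ) ^ (1 / q k)
  | 0, N, q, t, f, hq, ht, hf => by
    simp only [mixedNorm, Finset.range_zero, Finset.prod_empty]
    have := hf (fun _ => 0)
    rw [if_pos (by omega)] at this
    exact this
  | (r+1), N, q, t, f, hq, ht, hf => by
    simp only [mixedNorm]
    set P := ∏ k ∈ Finset.range r, (2:ℝ) ^ (1 / q (k+1)) with hPdef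
    have hP0 : (0:ℝ) < P := Finset.prod_pos fun k _ => Real.rpow_pos_of_pos (by norm_num) _
    have key : ∀ j : Fin N,
        (mixedNorm r N (fun i => q (i+1))
          (fun idx => f (fun i => if i = 0 then (j:ℕ) else idx (i-1)))) ^ q 0
        = if (j:ℕ)/2 = t 0 then P ^ q 0 else 0 := by
      intro j
      by_cases hj : (j:ℕ)/2 = t 0
      · rw [if_pos hj]
        congr 1
        refine mixedNorm_ind r N _ (fun k => t (k+1)) _
          (fun k hk => hq (k+1) (by omega)) (fun k hk => ht (k+1) (by omega)) ?_
        intro idx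
        rw [hf]
        refine if_congr ?_ rfl rfl
        constructor
        · intro h k hk
          have := h (k+1) (by omega)
          simpa using this
        · intro h k hk
          rcases Nat.eq_zero_or_pos k with rfl | hkp
          · simpa using hj
          · obtain ⟨k', rfl⟩ := Nat.exists_eq_add_of_le hkp
            have := h k' (by omega)
            rw [show 1 + k' = k' + 1 by omega]
            simpa using this
      · rw [if_neg hj]
        rw [mixedNorm_zero r N _ (fun k hk => (hq (k+1) (by omega)).ne') _ ?_]
        · exact Real.zero_rpow (hq 0 (by omega)).ne'
        · intro idx
          rw [← abs_eq_zero, hf, if_neg]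
          intro h
          exact hj (by simpa using h 0 (by omega))
    rw [Finset.sum_congr rfl (fun j _ => key j), sum_ind N (t 0) _ (ht 0 (by omega))]
    have hq0 : (0:ℝ) < q 0 := hq 0 (by omega)
    rw [Real.mul_rpow (by norm_num) (Real.rpow_nonneg hP0.le _)]
    rw [← Real.rpow_mul hP0.le, mul_one_div_cancel hq0.ne', Real.rpow_one]
    rw [Finset.prod_range_succ']
    ring

theorem inner_update (m n : ℕ) [inst : DecidableEq (Fin m)] (x : Fin m → Fin n → ℝ)
    (i : Fin m) (c : Fin n → ℝ) :
    (fun k j => if h : k < m ∧ j < n then (Function.update x i c) ⟨k, h.1⟩ ⟨j, h.2⟩ else 0)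
    = Function.update (fun k j => if h : k < m ∧ j < n then x ⟨k, h.1⟩ ⟨j, h.2⟩ else 0)
        (i : ℕ) (fun j => if h : j < n then c ⟨j, h⟩ else 0) := by
  funext k j
  rcases eq_or_ne k (i:ℕ) with rfl | hk
  · rw [Function.update_self]
    by_cases hj : j < n
    · rw [dif_pos ⟨i.isLt, hj⟩, dif_pos hj, Fin.eta, Function.update_self]
    · rw [dif_neg (by tauto), dif_neg hj]
  · rw [Function.update_of_ne hk]
    by_cases hkm : k < m
    · by_cases hj : j < n
      · rw [dif_pos ⟨hkm, hj⟩, dif_pos ⟨hkm, hj⟩,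
          Function.update_of_ne (Fin.ne_of_val_ne hk)]
      · rw [dif_neg (by tauto), dif_neg (by tauto)]
    · rw [dif_neg (by tauto), dif_neg (by tauto)]

noncomputable def Tmlm (m n : ℕ) : MultilinearMap ℝ (fun _ : Fin m => (Fin n → ℝ)) ℝ where
  toFun x := Tform m (fun k j => if h : k < m ∧ j < n then x ⟨k, h.1⟩ ⟨j, h.2⟩ else 0)
  map_update_add' := by
    intro inst x i a b
    beta_reduce
    rw [inner_update, inner_update, inner_update]
    have hab : (fun j => if h : j < n then (a+b) ⟨j, h⟩ else 0)
        = (fun j => if h : j < n then a ⟨j, h⟩ else 0)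
          + (fun j => if h : j < n then b ⟨j, h⟩ else 0) := by
      funext j
      by_cases hj : j < n <;> simp [hj]
    rw [hab]
    exact Tform_update_add m _ i i.isLt _ _
  map_update_smul' := by
    intro inst x i c a
    beta_reduce
    rw [inner_update, inner_update]
    have hca : (fun j => if h : j < n then (c • a) ⟨j, h⟩ else 0)
        = c • (fun j => if h : j < n then a ⟨j, h⟩ else 0) := by
      funext j
      by_cases hj : j < n <;> simp [hj]
    rw [hca, smul_eq_mul]
    exact Tform_update_smul m _ i i.isLt c _

theorem Tmlm_apply (m n : ℕ) (x : Fin m → Fin n → ℝ) :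
    Tmlm m n x = Tform m (fun k j => if h : k < m ∧ j < n then x ⟨k, h.1⟩ ⟨j, h.2⟩ else 0) := rfl

theorem rpow_sum (s : Finset ℕ) (a : ℕ → ℝ) :
    ∏ k ∈ s, (2:ℝ) ^ (a k) = (2:ℝ) ^ (∑ k ∈ s, a k) := by
  induction s using Finset.cons_induction with
  | empty => simp
  | cons i s his ih =>
    rw [Finset.prod_cons, Finset.sum_cons, ih, ← Real.rpow_add (by norm_num)]

open Classical in
theorem fabs_formula (r : ℕ) (idx : ℕ → ℕ) :
    |((Tmlm (r+2) (2^(r+1))).domDomCongr (finRotate (r+2))) (fun k => eVec (2^(r+1)) (idx (k:ℕ)))|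
    = if (idx 0 / 2 = 0 ∧ idx 1 < 2^(r+1) ∧
        ∀ k, 0 < k → k < r+1 → idx (k+1) / 2 = idx 1 / 2^k) then 1 else 0 := by
  set n := 2^(r+1) with hn
  have hn2 : 2 ≤ n := by
    calc 2 = 2^1 := rfl
    _ ≤ 2^(r+1) := Nat.pow_le_pow_right (by norm_num) (by omega)
  set g : ℕ → ℕ := fun k => idx ((k+1) % (r+2)) with hg
  have hrot : ∀ (k : ℕ) (hk : k < r+2), ((finRotate (r+2) ⟨k, hk⟩ : Fin (r+2)) : ℕ) = (k+1) % (r+2) := by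
    intro k hk
    rw [finRotate_succ_apply]
    simp only [Fin.add_def, Fin.val_one]
  have happ : ((Tmlm (r+2) n).domDomCongr (finRotate (r+2))) (fun k => eVec n (idx (k:ℕ)))
      = Tform (r+2) (fun k j => if h : k < r+2 ∧ j < n then
          eVec n (idx ((finRotate (r+2) ⟨k, h.1⟩ : ℕ))) ⟨j, h.2⟩ else 0) := rfl
  have g0eq : g 0 = idx 1 := by
    simp only [hg]
    rw [Nat.mod_eq_of_lt (show 1 < r+2 by omega)]
  have gkeq : ∀ k, k < r+1 → g k = idx (k+1) := by
    intro k hk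
    simp only [hg]
    rw [Nat.mod_eq_of_lt (by omega)]
  have gr1eq : g (r+1) = idx 0 := by
    simp only [hg]
    rw [Nat.mod_self]
  by_cases hbig : ∀ k, k < r+2 → g k < n
  · have heq : ((Tmlm (r+2) n).domDomCongr (finRotate (r+2))) (fun k => eVec n (idx (k:ℕ)))
        = Tform (r+2) (fun k => eF (g k)) := by
      rw [happ]
      apply Tform_congr
      intro k hk
      funext j
      by_cases hj : j < n
      · rw [dif_pos ⟨hk, hj⟩, hrot k hk]
        simp only [eVec, eF, hg]
      · rw [dif_neg (by tauto)]
        simp only [eF]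
        rw [if_neg (by have := hbig k hk; omega)]
    rw [heq, Tform_e (r+2) (by omega) g]
    refine if_congr ?_ rfl rfl
    rw [show r+2-1 = r+1 from rfl]
    constructor
    · rintro ⟨h1, h2⟩
      rw [g0eq] at h1
      refine ⟨?_, h1, fun k hk hk2 => ?_⟩
      · have h3 := h2 (r+1) (by omega) (by omega)
        rw [gr1eq, g0eq, Nat.div_eq_of_lt h1] at h3
        exact h3
      · have h3 := h2 k hk (by omega)
        rwa [gkeq k hk2, g0eq] at h3
    · rintro ⟨h1, h2, h3⟩
      refine ⟨by rwa [g0eq], fun k hk hk2 => ?_⟩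
      rcases lt_or_ge k (r+1) with h | h
      · rw [gkeq k h, g0eq]
        exact h3 k hk h
      · have hkr : k = r+1 := by omega
        subst hkr
        rw [gr1eq, g0eq, Nat.div_eq_of_lt h2]
        exact h1
  · push_neg at hbig
    obtain ⟨k0, hk0, hk0'⟩ := hbig
    have hz : ((Tmlm (r+2) n).domDomCongr (finRotate (r+2))) (fun k => eVec n (idx (k:ℕ))) = 0 := by
      rw [happ]
      apply Tform_zero (r+2) k0 hk0
      intro j
      by_cases hj : j < n
      · rw [dif_pos ⟨hk0, hj⟩, hrot k0 hk0]
        simp only [eVec]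
        rw [if_neg]
        show ¬ ((⟨j, hj⟩ : Fin n) : ℕ) = g k0
        simp only [Fin.val_mk]
        omega
      · rw [dif_neg (by tauto)]
    rw [hz, abs_zero, if_neg]
    rintro ⟨h1, h2, h3⟩
    have hsmall : g k0 < n := by
      rcases Nat.eq_zero_or_pos k0 with rfl | hk0p
      · rw [g0eq]; exact h2
      · rcases lt_or_ge k0 (r+1) with hh | hh
        · rw [gkeq k0 hh]
          have h4 := h3 k0 hk0p hh
          have h5 : idx 1 / 2^k0 ≤ idx 1 / 2 :=
            Nat.div_le_div_left (by
              calc 2 = 2^1 := rfl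
              _ ≤ 2^k0 := Nat.pow_le_pow_right (by norm_num) (by omega)) (by norm_num)
          have h6 : idx (k0+1)/2 ≤ idx 1/2 := by rw [h4]; exact h5
          have hneven : n = 2*2^r := by rw [hn, pow_succ]; ring
          omega
        · have hkr : k0 = r+1 := by omega
          subst hkr
          rw [gr1eq]
          omega
    omega

theorem mixedNorm_succ (m N : ℕ) (q : ℕ → ℝ) (f : (ℕ → ℕ) → ℝ) :
    mixedNorm (m+1) N q f = (∑ j : Fin N, (mixedNorm m N (fun i => q (i+1))
      (fun idx => f (fun i => if i = 0 then (j:ℕ) else idx (i-1)))) ^ q 0) ^ (1/q 0) := rfl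

open Classical in
theorem mixedNorm_value (r : ℕ) (q : ℕ → ℝ) (hq : ∀ i, i < r+2 → 0 < q i)
    (f : (ℕ → ℕ) → ℝ)
    (hfabs : ∀ idx, |f idx| = if (idx 0 / 2 = 0 ∧ idx 1 < 2^(r+1) ∧
        ∀ k, 0 < k → k < r+1 → idx (k+1) / 2 = idx 1 / 2^k) then 1 else 0) :
    mixedNorm (r+2) (2^(r+1)) q f
      = (2:ℝ)^(1/q 0) * ((((2:ℕ)^(r+1) : ℕ) : ℝ)^(1/q 1)
          * ∏ k ∈ Finset.range r, (2:ℝ)^(1/q (k+2))) := by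
  set n := 2^(r+1) with hn
  have hn2 : 2 ≤ n := by
    calc 2 = 2^1 := rfl
    _ ≤ 2^(r+1) := Nat.pow_le_pow_right (by norm_num) (by omega)
  have hneven : n = 2*2^r := by rw [hn, pow_succ]; ring
  set P := ∏ k ∈ Finset.range r, (2:ℝ)^(1/q (k+2)) with hP
  have hPpos : 0 < P := Finset.prod_pos fun k _ => Real.rpow_pos_of_pos (by norm_num) _
  have hstep1 : ∀ j0 : Fin n, (j0:ℕ)/2 = 0 →
      mixedNorm (r+1) n (fun i => q (i+1))
        (fun idx => f (fun i => if i = 0 then (j0:ℕ) else idx (i-1)))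
      = ((n:ℕ):ℝ)^(1/q 1) * P := by
    intro j0 hj0
    rw [mixedNorm_succ]
    beta_reduce
    have hterm : ∀ j1 : Fin n,
        mixedNorm r n (fun i => q (i+1+1))
          (fun idx => f fun i => if i = 0 then (j0:ℕ) else
            if i-1 = 0 then (j1:ℕ) else idx (i-1-1)) = P := by
      intro j1
      have hf' : ∀ idx : ℕ → ℕ, |f (fun i => if i = 0 then (j0:ℕ) else
            if i-1 = 0 then (j1:ℕ) else idx (i-1-1))|
          = if (∀ k, k < r → idx k / 2 = (j1:ℕ)/2^(k+1)) then 1 else 0 := by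
        intro idx
        set idx' : ℕ → ℕ := fun i => if i = 0 then (j0:ℕ) else
            if i-1 = 0 then (j1:ℕ) else idx (i-1-1) with hidx'
        rw [hfabs idx']
        refine if_congr ?_ rfl rfl
        have e0 : idx' 0 = (j0:ℕ) := rfl
        have e1 : idx' 1 = (j1:ℕ) := rfl
        have ek : ∀ k, idx' (k+2) = idx k := fun k => rfl
        constructor
        · rintro ⟨-, -, h3⟩ k hk
          have := h3 (k+1) (by omega) (by omega)
          rwa [show k+1+1 = k+2 from rfl, ek k, e1] at this
        · intro h
          refine ⟨by rw [e0]; omega, by rw [e1]; exact j1.isLt, ?_⟩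
          intro k hk hk2
          obtain ⟨k', rfl⟩ : ∃ k', k = k'+1 := ⟨k-1, by omega⟩
          rw [show k'+1+1 = k'+2 from rfl, ek k', e1]
          exact h k' (by omega)
      have hind := mixedNorm_ind r n (fun i => q (i+1+1)) (fun k => (j1:ℕ)/2^(k+1))
        (fun idx => f fun i => if i = 0 then (j0:ℕ) else
            if i-1 = 0 then (j1:ℕ) else idx (i-1-1))
        (fun k hk => hq (k+2) (by omega))
        (fun k hk => by
          have h5 : (j1:ℕ)/2^(k+1) ≤ (j1:ℕ)/2 :=
            Nat.div_le_div_left (by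
              calc 2 = 2^1 := rfl
              _ ≤ 2^(k+1) := Nat.pow_le_pow_right (by norm_num) (by omega)) (by norm_num)
          have := j1.isLt
          show 2 * ((j1:ℕ)/2^(k+1)) + 1 < n
          omega)
        hf'
      rw [hind]
    rw [Finset.sum_congr rfl (fun j1 _ => by rw [hterm j1])]
    rw [Finset.sum_const, Finset.card_univ, Fintype.card_fin, nsmul_eq_mul]
    rw [Real.mul_rpow (Nat.cast_nonneg n) (Real.rpow_nonneg hPpos.le _)]
    rw [← Real.rpow_mul hPpos.le,
      mul_one_div_cancel (show q (0+1) ≠ 0 from (hq 1 (by omega)).ne'), Real.rpow_one]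
  have hstep0 : ∀ j0 : Fin n, ¬((j0:ℕ)/2 = 0) →
      mixedNorm (r+1) n (fun i => q (i+1))
        (fun idx => f (fun i => if i = 0 then (j0:ℕ) else idx (i-1))) = 0 := by
    intro j0 hj0
    apply mixedNorm_zero (r+1) n _ (fun k hk => (hq (k+1) (by omega)).ne')
    intro idx
    have h1 := hfabs (fun i => if i = 0 then (j0:ℕ) else idx (i-1))
    rw [if_neg] at h1
    · exact abs_eq_zero.mp h1
    · rintro ⟨h2, -, -⟩
      exact hj0 h2
  rw [mixedNorm_succ]
  have hterm0 : ∀ j0 : Fin n,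
      (mixedNorm (r+1) n (fun i => q (i+1))
        (fun idx => f (fun i => if i = 0 then (j0:ℕ) else idx (i-1)))) ^ q 0
      = if (j0:ℕ)/2 = 0 then (((n:ℕ):ℝ)^(1/q 1) * P)^(q 0) else 0 := by
    intro j0
    by_cases hj : (j0:ℕ)/2 = 0
    · rw [if_pos hj, hstep1 j0 hj]
    · rw [if_neg hj, hstep0 j0 hj, Real.zero_rpow (hq 0 (by omega)).ne']
  rw [Finset.sum_congr rfl (fun j0 _ => hterm0 j0), sum_ind n 0 _ (by omega)]
  have hV0 : (0:ℝ) ≤ ((n:ℕ):ℝ)^(1/q 1) * P :=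
    mul_nonneg (Real.rpow_nonneg (Nat.cast_nonneg n) _) hPpos.le
  rw [Real.mul_rpow (by norm_num) (Real.rpow_nonneg hV0 _), ← Real.rpow_mul hV0,
    mul_one_div_cancel (hq 0 (by omega)).ne', Real.rpow_one]


/-- Lower bound for the constants of the generalized mixed-norm inequality,
second version: if `Σ 1/qᵢ = (m+1)/2` and the mixed-norm inequality with
exponents `(q₁,...,q_m)` holds with constant `C` for all real `m`-linear
forms on `(ℓ∞ⁿ)^m` and all `n`, then
`C ≥ 2^{((m-1)q̂₂ + Σ_{i≠2} q̂ᵢ - (m-1)q₁⋯q_m)/(q₁⋯q_m)}` where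
`q̂ᵢ = (q₁⋯q_m)/qᵢ`. -/
theorem stmt_12 (m : ℕ) (hm : 2 ≤ m) (q : ℕ → ℝ)
    (hq : ∀ i < m, q i ∈ Set.Icc (1:ℝ) 2)
    (hsum : ∑ i ∈ Finset.range m, 1 / q i = ((m : ℝ) + 1) / 2)
    (C : ℝ)
    (hC : ∀ n : ℕ, ∀ T : MultilinearMap ℝ (fun _ : Fin m => (Fin n → ℝ)) ℝ,
      mixedNorm m n q (fun idx => T fun k => eVec n (idx (k : ℕ)))
        ≤ C * supNorm m n T) :
    (2:ℝ) ^ ((((m : ℝ) - 1) * ((∏ i ∈ Finset.range m, q i) / q 1)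
        + (∑ i ∈ (Finset.range m).erase 1, (∏ i ∈ Finset.range m, q i) / q i)
        - ((m : ℝ) - 1) * ∏ i ∈ Finset.range m, q i)
      / ∏ i ∈ Finset.range m, q i) ≤ C := by
  obtain ⟨r, rfl⟩ : ∃ r, m = r + 2 := ⟨m - 2, by omega⟩
  have hq1 : ∀ i, i < r+2 → 0 < q i := fun i hi => lt_of_lt_of_le one_pos (hq i hi).1
  set T := (Tmlm (r+2) (2^(r+1))).domDomCongr (finRotate (r+2)) with hT
  have hval : mixedNorm (r+2) (2^(r+1)) q
        (fun idx => T (fun k => eVec (2^(r+1)) (idx (k:ℕ))))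
      = (2:ℝ)^(1/q 0) * ((((2:ℕ)^(r+1) : ℕ) : ℝ)^(1/q 1)
          * ∏ k ∈ Finset.range r, (2:ℝ)^(1/q (k+2))) :=
    mixedNorm_value r q hq1 _ (fun idx => fabs_formula r idx)
  have hub : ∀ v ∈ {v : ℝ | ∃ x : Fin (r+2) → Fin (2^(r+1)) → ℝ,
      (∀ i, ‖x i‖ ≤ 1) ∧ v = |T x|}, v ≤ (2:ℝ)^(r+1) := by
    rintro v ⟨x, hx, rfl⟩
    have happ : T x = Tform (r+2) (fun k j => if h : k < r+2 ∧ j < 2^(r+1) then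
        x (finRotate (r+2) ⟨k, h.1⟩) ⟨j, h.2⟩ else 0) := rfl
    rw [happ]
    have hb := Tform_bound (r+2) (fun k j => if h : k < r+2 ∧ j < 2^(r+1) then
        x (finRotate (r+2) ⟨k, h.1⟩) ⟨j, h.2⟩ else 0) ?_
    · exact hb
    · intro k j
      beta_reduce
      by_cases h : k < r+2 ∧ j < 2^(r+1)
      · rw [dif_pos h]
        calc |x (finRotate (r+2) ⟨k, h.1⟩) ⟨j, h.2⟩|
            = ‖x (finRotate (r+2) ⟨k, h.1⟩) ⟨j, h.2⟩‖ := (Real.norm_eq_abs _).symm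
          _ ≤ ‖x (finRotate (r+2) ⟨k, h.1⟩)‖ := norm_le_pi_norm _ _
          _ ≤ 1 := hx _
      · rw [dif_neg h]
        norm_num
  have hsup_le : supNorm (r+2) (2^(r+1)) T ≤ (2:ℝ)^(r+1) :=
    Real.sSup_le hub (by positivity)
  have hbdd : BddAbove {v : ℝ | ∃ x : Fin (r+2) → Fin (2^(r+1)) → ℝ,
      (∀ i, ‖x i‖ ≤ 1) ∧ v = |T x|} := ⟨(2:ℝ)^(r+1), fun v hv => hub v hv⟩
  have hmem : |T 0| ∈ {v : ℝ | ∃ x : Fin (r+2) → Fin (2^(r+1)) → ℝ,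
      (∀ i, ‖x i‖ ≤ 1) ∧ v = |T x|} := ⟨0, fun i => by simp, rfl⟩
  have hsup0 : 0 ≤ supNorm (r+2) (2^(r+1)) T :=
    le_trans (abs_nonneg _) (le_csSup hbdd hmem)
  have hineq := hC (2^(r+1)) T
  rw [hval] at hineq
  have hPpos : (0:ℝ) < ∏ k ∈ Finset.range r, (2:ℝ)^(1/q (k+2)) :=
    Finset.prod_pos fun k _ => Real.rpow_pos_of_pos (by norm_num) _
  have hVpos : (0:ℝ) < (2:ℝ)^(1/q 0) * ((((2:ℕ)^(r+1) : ℕ) : ℝ)^(1/q 1)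
      * ∏ k ∈ Finset.range r, (2:ℝ)^(1/q (k+2))) := by
    apply mul_pos (Real.rpow_pos_of_pos (by norm_num) _)
    apply mul_pos _ hPpos
    apply Real.rpow_pos_of_pos
    have : 0 < (2:ℕ)^(r+1) := by positivity
    exact_mod_cast this
  have hCpos : 0 < C := by
    rcases le_or_gt C 0 with h | h
    · exfalso
      have h2 : C * supNorm (r+2) (2^(r+1)) T ≤ 0 :=
        mul_nonpos_iff.mpr (Or.inr ⟨h, hsup0⟩)
      linarith
    · exact h
  have hmain : (2:ℝ)^(1/q 0) * ((((2:ℕ)^(r+1) : ℕ) : ℝ)^(1/q 1)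
      * ∏ k ∈ Finset.range r, (2:ℝ)^(1/q (k+2))) ≤ C * (2:ℝ)^(r+1) :=
    le_trans hineq (mul_le_mul_of_nonneg_left hsup_le hCpos.le)
  -- rewrite LHS as a single power of 2
  have hcomb : (2:ℝ)^(1/q 0) * ((((2:ℕ)^(r+1) : ℕ) : ℝ)^(1/q 1)
      * ∏ k ∈ Finset.range r, (2:ℝ)^(1/q (k+2)))
      = (2:ℝ)^(1/q 0 + ((r:ℝ)+1)*(1/q 1) + ∑ k ∈ Finset.range r, 1/q (k+2)) := by
    rw [rpow_sum (Finset.range r) (fun k => 1/q (k+2))]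
    have hnat : (((2:ℕ)^(r+1) : ℕ) : ℝ) = (2:ℝ)^((r+1:ℕ)) := by push_cast; ring
    rw [hnat, ← Real.rpow_natCast 2 (r+1), ← Real.rpow_mul (by norm_num)]
    rw [← Real.rpow_add (by norm_num), ← Real.rpow_add (by norm_num)]
    congr 1
    push_cast
    ring
  rw [hcomb] at hmain
  have hmpow : ((2:ℝ)^(r+1) : ℝ) = (2:ℝ)^(((r:ℝ)+1)) := by
    rw [← Real.rpow_natCast 2 (r+1)]
    push_cast
    ring_nf
  rw [hmpow] at hmain
  have hdivle : (2:ℝ)^(1/q 0 + ((r:ℝ)+1)*(1/q 1) + ∑ k ∈ Finset.range r, 1/q (k+2))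
      / (2:ℝ)^(((r:ℝ)+1)) ≤ C :=
    (div_le_iff₀ (Real.rpow_pos_of_pos (by norm_num) _)).mpr hmain
  rw [← Real.rpow_sub (by norm_num)] at hdivle
  -- exponent arithmetic
  set Q := ∏ i ∈ Finset.range (r+2), q i with hQ
  have hQpos : 0 < Q := Finset.prod_pos fun i hi => hq1 i (Finset.mem_range.mp hi)
  have hdivQ : ∀ i, i < r+2 → Q / q i / Q = 1 / q i := by
    intro i hi
    rw [div_div, mul_comm, ← div_div, div_self hQpos.ne']
  have hsumsplit : ∑ i ∈ (Finset.range (r+2)).erase 1, Q / q i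
      = Q/q 0 + ∑ k ∈ Finset.range r, Q/q (k+2) := by
    have h1 := Finset.add_sum_erase (Finset.range (r+2)) (fun i => Q/q i)
      (by simp : (1:ℕ) ∈ Finset.range (r+2))
    have h2 : ∑ i ∈ Finset.range (r+2), Q/q i
        = Q/q 0 + Q/q 1 + ∑ k ∈ Finset.range r, Q/q (k+2) := by
      rw [show r+2 = (r+1)+1 from rfl, Finset.sum_range_succ', Finset.sum_range_succ']
      ring
    linarith
  have hEeq : ((((r+2:ℕ) : ℝ) - 1) * (Q / q 1)
        + (∑ i ∈ (Finset.range (r+2)).erase 1, Q / q i)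
        - (((r+2:ℕ) : ℝ) - 1) * Q) / Q
      = 1/q 0 + ((r:ℝ)+1)*(1/q 1) + (∑ k ∈ Finset.range r, 1/q (k+2)) - (((r:ℝ))+1) := by
    have hcast : (((r+2:ℕ)) : ℝ) - 1 = (r:ℝ) + 1 := by push_cast; ring
    rw [hsumsplit, hcast]
    rw [sub_div, add_div, add_div]
    rw [mul_div_assoc, hdivQ 1 (by omega), mul_div_assoc, div_self hQpos.ne',
      hdivQ 0 (by omega), Finset.sum_div]
    rw [Finset.sum_congr rfl (fun k hk => hdivQ (k+2)
      (by have := Finset.mem_range.mp hk; omega))]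
    ring
  rw [hEeq]
  convert hdivle using 2
end

section
/- For the multiple exponent q = (2,1,2,...,2) (with m entries, m ≥ 2), the optimal constant C of the real mixed (ℓ₁,ℓ₂)-Littlewood inequality — i.e., the least C such that (Σ_{j₁=1}^n (Σ_{j₂=1}^n (Σ_{j₃,...,j_m=1}^n |T(e_{j₁},...,e_{j_m})|²)^{1/2})²)^{1/2} ≤ C‖T‖ for all real m-linear forms T on (ℓ∞ⁿ)^m and all n — equals 2^{(m-1)/2}. -/
/-- The canonical basis vectors of `ℝⁿ`. -/
def e (n : ℕ) (j : Fin n) : Fin n → ℝ := fun i => if i = j then 1 else 0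

namespace Stmt13
set_option linter.unusedSectionVars false
set_option linter.unnecessarySeqFocus false

noncomputable section

def sg (b : Bool) : ℝ := if b then 1 else -1

lemma sg_mul_self (b : Bool) : sg b * sg b = 1 := by cases b <;> norm_num [sg]

lemma sg_not (b : Bool) : sg (!b) = - sg b := by cases b <;> norm_num [sg]

lemma abs_sg (b : Bool) : |sg b| = 1 := by cases b <;> norm_num [sg]

lemma sum_sg : ∑ b : Bool, sg b = 0 := by norm_num [sg]

variable {ι : Type*} [Fintype ι] [DecidableEq ι]

/-- Walsh character. -/
def wal (T : Finset ι) (ε : ι → Bool) : ℝ := ∏ i ∈ T, sg (ε i)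

/-- Unnormalized Fourier coefficient. -/
def hat (f : (ι → Bool) → ℝ) (T : Finset ι) : ℝ := ∑ ε : ι → Bool, f ε * wal T ε

lemma prod_indicator (A : Finset ι) (h : ι → ℝ) :
    ∏ i ∈ A, h i = ∏ i : ι, (if i ∈ A then h i else 1) := by
  rw [← Finset.prod_subset (Finset.subset_univ A) (f := fun i => if i ∈ A then h i else 1)
      (by intro x _ hx; simp [hx])]
  exact Finset.prod_congr rfl (fun x hx => by simp [hx])

/-- Sum over functions of a product equals product of sums. -/
lemma sum_fun_prod (g : ι → Bool → ℝ) :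
    ∑ ε : ι → Bool, ∏ i : ι, g i (ε i) = ∏ i : ι, ∑ b : Bool, g i b := by
  rw [Finset.prod_univ_sum, ← Fintype.piFinset_univ]

/-- Orthogonality over ε. -/
lemma sum_eps_wal (A B : Finset ι) :
    ∑ ε : ι → Bool, wal A ε * wal B ε
      = if A = B then (2:ℝ) ^ (Fintype.card ι) else 0 := by
  have key : ∀ ε : ι → Bool, wal A ε * wal B ε
      = ∏ i : ι, ((if i ∈ A then sg (ε i) else 1) * (if i ∈ B then sg (ε i) else 1)) := by
    intro ε
    rw [wal, wal, prod_indicator A (fun i => sg (ε i)), prod_indicator B (fun i => sg (ε i)),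
      Finset.prod_mul_distrib]
  simp_rw [key]
  rw [sum_fun_prod (g := fun i b => (if i ∈ A then sg b else 1) * (if i ∈ B then sg b else 1))]
  have factor : ∀ i : ι, (∑ b : Bool, (if i ∈ A then sg b else 1) * (if i ∈ B then sg b else 1))
      = if ((i ∈ A) ↔ (i ∈ B)) then 2 else 0 := by
    intro i
    by_cases hA : i ∈ A <;> by_cases hB : i ∈ B <;>
      norm_num [hA, hB, sg]
  simp_rw [factor]
  by_cases hAB : A = B
  · subst hAB
    simp [Finset.prod_const, Finset.card_univ]
  · rw [if_neg hAB]
    have : ∃ i : ι, ¬ ((i ∈ A) ↔ (i ∈ B)) := by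
      by_contra hc
      push_neg at hc
      exact hAB (Finset.ext (fun i => (hc i)))
    obtain ⟨i, hi⟩ := this
    exact Finset.prod_eq_zero (Finset.mem_univ i) (by rw [if_neg hi])

/-- Orthogonality over T. -/
lemma sum_T_wal (ε δ : ι → Bool) :
    ∑ T : Finset ι, wal T ε * wal T δ
      = if ε = δ then (2:ℝ) ^ (Fintype.card ι) else 0 := by
  have key : ∀ T : Finset ι, wal T ε * wal T δ = ∏ i ∈ T, (sg (ε i) * sg (δ i)) := by
    intro T; rw [wal, wal, Finset.prod_mul_distrib]
  simp_rw [key]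
  have step : ∑ T : Finset ι, ∏ i ∈ T, (sg (ε i) * sg (δ i))
      = ∏ i : ι, (sg (ε i) * sg (δ i) + 1) := by
    rw [Finset.prod_add, Finset.powerset_univ]
    exact Finset.sum_congr rfl (fun T _ => by simp)
  rw [step]
  have factor : ∀ i : ι, sg (ε i) * sg (δ i) + 1 = if ε i = δ i then 2 else 0 := by
    intro i
    rcases Bool.eq_false_or_eq_true (ε i) with h1 | h1 <;>
      rcases Bool.eq_false_or_eq_true (δ i) with h2 | h2 <;>
      rw [h1, h2] <;> norm_num [sg]
  simp_rw [factor]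
  by_cases h : ε = δ
  · subst h; simp [Finset.prod_const, Finset.card_univ]
  · rw [if_neg h]
    have : ∃ i, ¬ (ε i = δ i) := by
      by_contra hc; push_neg at hc; exact h (funext hc)
    obtain ⟨i, hi⟩ := this
    exact Finset.prod_eq_zero (Finset.mem_univ i) (by rw [if_neg hi])

/-- Parseval (unnormalized). -/
lemma parseval (f : (ι → Bool) → ℝ) :
    ∑ T : Finset ι, (hat f T)^2 = (2:ℝ) ^ (Fintype.card ι) * ∑ ε : ι → Bool, (f ε)^2 := by
  have expand : ∀ T : Finset ι, (hat f T)^2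
      = ∑ ε : ι → Bool, ∑ δ : ι → Bool, (f ε * f δ) * (wal T ε * wal T δ) := by
    intro T
    rw [hat, sq, Finset.sum_mul_sum]
    exact Finset.sum_congr rfl (fun ε _ => Finset.sum_congr rfl (fun δ _ => by ring))
  simp_rw [expand]
  rw [Finset.sum_comm]
  have inner : ∀ ε : ι → Bool,
      (∑ T : Finset ι, ∑ δ : ι → Bool, (f ε * f δ) * (wal T ε * wal T δ))
        = (2:ℝ) ^ (Fintype.card ι) * (f ε)^2 := by
    intro ε
    rw [Finset.sum_comm]
    have swap : ∀ δ : ι → Bool, ∑ T : Finset ι, (f ε * f δ) * (wal T ε * wal T δ)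
        = (f ε * f δ) * (if ε = δ then (2:ℝ) ^ (Fintype.card ι) else 0) := by
      intro δ
      rw [← Finset.mul_sum, sum_T_wal]
    simp_rw [swap, mul_ite, mul_zero]
    rw [Finset.sum_ite_eq]
    simp [sq]
    ring
  rw [Finset.sum_congr rfl (fun ε _ => inner ε), ← Finset.mul_sum]

/-- flip one coordinate -/
def fl (i : ι) (ε : ι → Bool) : ι → Bool := Function.update ε i (!(ε i))

lemma fl_invol (i : ι) (ε : ι → Bool) : fl i (fl i ε) = ε := by
  funext j
  by_cases hj : j = i
  · subst hj; simp [fl]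
  · simp [fl, Function.update_of_ne hj]

lemma wal_fl (T : Finset ι) (i : ι) (ε : ι → Bool) :
    wal T (fl i ε) = (if i ∈ T then -1 else 1) * wal T ε := by
  by_cases hi : i ∈ T
  · rw [if_pos hi, wal, wal, ← Finset.mul_prod_erase T _ hi, ← Finset.mul_prod_erase T _ hi]
    have h1 : sg (fl i ε i) = - sg (ε i) := by
      simp [fl, sg_not]
    have h2 : ∏ j ∈ T.erase i, sg (fl i ε j) = ∏ j ∈ T.erase i, sg (ε j) := by
      refine Finset.prod_congr rfl (fun j hj => ?_)
      have : j ≠ i := Finset.ne_of_mem_erase hj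
      simp [fl, Function.update_of_ne this]
    rw [h1, h2]; ring
  · rw [if_neg hi, one_mul, wal, wal]
    refine Finset.prod_congr rfl (fun j hj => ?_)
    have : j ≠ i := fun h => hi (h ▸ hj)
    simp [fl, Function.update_of_ne this]

lemma sum_comp_fl (i : ι) (g : (ι → Bool) → ℝ) :
    ∑ ε : ι → Bool, g (fl i ε) = ∑ ε : ι → Bool, g ε := by
  apply Fintype.sum_bijective (fl i)
  · exact Function.Involutive.bijective (fl_invol i)
  · intro ε; rfl

lemma hat_comp_fl (f : (ι → Bool) → ℝ) (i : ι) (T : Finset ι) :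
    hat (fun ε => f (fl i ε)) T = (if i ∈ T then -1 else 1) * hat f T := by
  rw [hat, hat, Finset.mul_sum]
  have h1 : ∀ ε : ι → Bool, f (fl i ε) * wal T ε = f (fl i ε) * wal T (fl i (fl i ε)) := by
    intro ε; rw [fl_invol]
  rw [Finset.sum_congr rfl (fun ε _ => h1 ε),
    sum_comp_fl i (fun ε => f ε * wal T (fl i ε))]
  refine Finset.sum_congr rfl (fun ε _ => ?_)
  rw [wal_fl]
  ring

/-- discrete derivative (times 2) -/
def dd (i : ι) (f : (ι → Bool) → ℝ) : (ι → Bool) → ℝ := fun ε => f ε - f (fl i ε)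

lemma hat_dd (f : (ι → Bool) → ℝ) (i : ι) (T : Finset ι) :
    hat (dd i f) T = if i ∈ T then 2 * hat f T else 0 := by
  have : hat (dd i f) T = hat f T - hat (fun ε => f (fl i ε)) T := by
    rw [hat, hat, hat, ← Finset.sum_sub_distrib]
    exact Finset.sum_congr rfl (fun ε _ => by rw [dd]; ring)
  rw [this, hat_comp_fl]
  by_cases hi : i ∈ T <;> simp [hi] <;> ring

/-- negate all coordinates -/
def neg (ε : ι → Bool) : ι → Bool := fun i => !(ε i)

lemma neg_invol (ε : ι → Bool) : neg (neg ε) = ε := by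
  funext i; simp [neg]

lemma sum_comp_neg (g : (ι → Bool) → ℝ) :
    ∑ ε : ι → Bool, g (neg ε) = ∑ ε : ι → Bool, g ε := by
  apply Fintype.sum_bijective neg
  · exact Function.Involutive.bijective neg_invol
  · intro ε; rfl

lemma wal_neg (T : Finset ι) (ε : ι → Bool) :
    wal T (neg ε) = (-1)^(T.card) * wal T ε := by
  rw [wal, wal, ← Finset.prod_const (b := (-1:ℝ)), ← Finset.prod_mul_distrib]
  exact Finset.prod_congr rfl (fun j _ => by rw [neg, sg_not]; ring)

lemma hat_even_odd (f : (ι → Bool) → ℝ) (hf : ∀ ε, f (neg ε) = f ε)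
    (T : Finset ι) (hT : ¬ Even T.card) : hat f T = 0 := by
  have : hat f T = - hat f T := by
    conv_lhs => rw [hat, ← sum_comp_neg (fun ε => f ε * wal T ε)]
    rw [hat, ← Finset.sum_neg_distrib]
    refine Finset.sum_congr rfl (fun ε _ => ?_)
    rw [hf, wal_neg]
    rcases Nat.even_or_odd T.card with h | h
    · exact absurd h hT
    · rw [Odd.neg_one_pow h]; ring
  linarith

/-- Sharp L1 Khinchine (Szarek) via even-function Poincaré inequality. -/
theorem szarek (a : ι → ℝ) :
    (2:ℝ)^(Fintype.card ι) * Real.sqrt (∑ i, (a i)^2)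
      ≤ Real.sqrt 2 * ∑ ε : ι → Bool, |∑ i, a i * sg (ε i)| := by
  classical
  set N := Fintype.card ι with hN
  set S : (ι → Bool) → ℝ := fun ε => ∑ i, a i * sg (ε i) with hS
  set f : (ι → Bool) → ℝ := fun ε => |S ε| with hf
  set s : ℝ := ∑ i, (a i)^2 with hs
  have hs0 : 0 ≤ s := Finset.sum_nonneg (fun i _ => sq_nonneg _)
  -- Σ_ε S² = 2^N s
  have hSsq : ∑ ε : ι → Bool, (S ε)^2 = (2:ℝ)^N * s := by
    have expand : ∀ ε : ι → Bool, (S ε)^2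
        = ∑ p : ι × ι, (a p.1 * a p.2) * (wal {p.1} ε * wal {p.2} ε) := by
      intro ε
      rw [hS, sq, Finset.sum_mul_sum, Fintype.sum_prod_type]
      refine Finset.sum_congr rfl (fun i _ => Finset.sum_congr rfl (fun j _ => ?_))
      simp [wal]; ring
    simp_rw [expand]
    rw [Finset.sum_comm]
    have inner : ∀ p : ι × ι, (∑ ε : ι → Bool, (a p.1 * a p.2) * (wal {p.1} ε * wal {p.2} ε))
        = (a p.1 * a p.2) * (if p.1 = p.2 then (2:ℝ)^N else 0) := by
      intro p
      rw [← Finset.mul_sum, sum_eps_wal]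
      congr 1
      by_cases h : p.1 = p.2
      · simp [h, hN]
      · rw [if_neg h, if_neg (fun hh => h (Finset.singleton_injective hh))]
    rw [Finset.sum_congr rfl (fun p _ => inner p), Fintype.sum_prod_type]
    simp_rw [mul_ite, mul_zero]
    rw [Finset.sum_congr rfl
      (fun i _ => Finset.sum_ite_eq Finset.univ i (fun j => a i * a j * (2:ℝ)^N))]
    rw [hs, Finset.mul_sum]
    refine Finset.sum_congr rfl (fun i _ => ?_)
    simp [sq]; ring
  -- f is even
  have heven : ∀ ε, f (neg ε) = f ε := by
    intro ε
    have : S (neg ε) = - S ε := by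
      rw [hS, ← Finset.sum_neg_distrib]
      refine Finset.sum_congr rfl (fun i _ => ?_)
      rw [neg, sg_not]; ring
    rw [hf]
    simp only [this, abs_neg]
  -- pointwise derivative bound
  have hddpt : ∀ (i : ι) (ε : ι → Bool), (dd i f ε)^2 ≤ 4 * (a i)^2 := by
    intro i ε
    have hSfl : S (fl i ε) - S ε = -2 * (a i * sg (ε i)) := by
      rw [hS, ← Finset.sum_sub_distrib]
      have key : ∀ j : ι, a j * sg (fl i ε j) - a j * sg (ε j)
          = if j = i then -2 * (a i * sg (ε i)) else 0 := by
        intro j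
        by_cases hj : j = i
        · subst hj
          rw [if_pos rfl, fl, Function.update_self, sg_not]; ring
        · rw [if_neg hj, fl, Function.update_of_ne hj]; ring
      rw [Finset.sum_congr rfl (fun j _ => key j), Finset.sum_ite_eq' Finset.univ i]
      simp
    have habs : |dd i f ε| ≤ 2 * |a i| := by
      have h1 : |dd i f ε| ≤ |S ε - S (fl i ε)| := by
        simp only [dd, hf]
        exact abs_abs_sub_abs_le_abs_sub _ _
      have h2 : S ε - S (fl i ε) = 2 * (a i * sg (ε i)) := by linarith [hSfl]
      rw [h2] at h1
      calc |dd i f ε| ≤ |2 * (a i * sg (ε i))| := h1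
        _ = 2 * |a i| := by rw [abs_mul, abs_mul, abs_sg]; norm_num
    calc (dd i f ε)^2 = |dd i f ε|^2 := (sq_abs _).symm
      _ ≤ (2*|a i|)^2 := by
          apply pow_le_pow_left₀ (abs_nonneg _) habs
      _ = 4 * (a i)^2 := by rw [mul_pow, sq_abs]; norm_num
  -- sum of squared derivative coefficients
  have hddsum : ∀ i : ι, ∑ T : Finset ι, (if i ∈ T then 4 * (hat f T)^2 else 0)
      ≤ (2:ℝ)^N * ((2:ℝ)^N * (4 * (a i)^2)) := by
    intro i
    have e1 : ∀ T : Finset ι, (if i ∈ T then 4 * (hat f T)^2 else 0) = (hat (dd i f) T)^2 := by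
      intro T
      rw [hat_dd]
      by_cases hiT : i ∈ T
      · rw [if_pos hiT, if_pos hiT]; ring
      · rw [if_neg hiT, if_neg hiT]; norm_num
    rw [Finset.sum_congr rfl (fun T _ => e1 T), parseval]
    have : ∑ ε : ι → Bool, (dd i f ε)^2 ≤ (2:ℝ)^N * (4 * (a i)^2) := by
      calc ∑ ε : ι → Bool, (dd i f ε)^2 ≤ ∑ _ε : ι → Bool, 4 * (a i)^2 :=
            Finset.sum_le_sum (fun ε _ => hddpt i ε)
        _ = (2:ℝ)^N * (4 * (a i)^2) := by
            rw [Finset.sum_const, nsmul_eq_mul, Finset.card_univ, Fintype.card_fun,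
              Fintype.card_bool]
            push_cast
            rw [hN]
    exact mul_le_mul_of_nonneg_left this (by positivity)
  -- total weighted sum
  have hweight : ∑ T : Finset ι, ((T.card : ℝ)) * (4 * (hat f T)^2) ≤ 4 * ((2:ℝ)^N)^2 * s := by
    have e1 : ∑ T : Finset ι, ((T.card : ℝ)) * (4 * (hat f T)^2)
        = ∑ i : ι, ∑ T : Finset ι, (if i ∈ T then 4 * (hat f T)^2 else 0) := by
      rw [Finset.sum_comm]
      refine Finset.sum_congr rfl (fun T _ => ?_)
      rw [Finset.sum_ite_mem, Finset.univ_inter, Finset.sum_const, nsmul_eq_mul]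
    rw [e1]
    calc ∑ i : ι, ∑ T : Finset ι, (if i ∈ T then 4 * (hat f T)^2 else 0)
        ≤ ∑ i : ι, (2:ℝ)^N * ((2:ℝ)^N * (4 * (a i)^2)) := Finset.sum_le_sum (fun i _ => hddsum i)
      _ = 4 * ((2:ℝ)^N)^2 * s := by
          rw [hs, Finset.mul_sum]
          exact Finset.sum_congr rfl (fun i _ => by ring)
  -- level comparison
  have hlevel : ∀ T : Finset ι, 2 * (if T = ∅ then 0 else (hat f T)^2)
      ≤ ((T.card : ℝ)) * (hat f T)^2 := by
    intro T
    by_cases hT : T = ∅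
    · rw [if_pos hT, hT]; simp
    · rw [if_neg hT]
      rcases Nat.lt_or_ge T.card 2 with hc | hc
      · have hc1 : T.card = 1 := by
          have := Finset.card_pos.mpr (Finset.nonempty_of_ne_empty hT)
          omega
        have : hat f T = 0 := hat_even_odd f heven T (by rw [hc1]; simp)
        rw [this]; simp
      · have : (2:ℝ) ≤ (T.card : ℝ) := by exact_mod_cast hc
        nlinarith [sq_nonneg (hat f T)]
  -- assemble
  have hsplit : (hat f ∅)^2 + ∑ T ∈ Finset.univ.erase ∅, (hat f T)^2
      = ∑ T : Finset ι, (hat f T)^2 := Finset.add_sum_erase Finset.univ (fun T => (hat f T)^2) (Finset.mem_univ ∅)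
  have hremain : ∑ T ∈ Finset.univ.erase ∅, (hat f T)^2
      = ∑ T : Finset ι, (if T = ∅ then 0 else (hat f T)^2) := by
    rw [← Finset.add_sum_erase Finset.univ (fun T => if T = ∅ then 0 else (hat f T)^2) (Finset.mem_univ (∅ : Finset ι))]
    rw [if_pos rfl, zero_add]
    exact Finset.sum_congr rfl (fun T hT => (if_neg (Finset.ne_of_mem_erase hT)).symm)
  have hub : ∑ T : Finset ι, (if T = ∅ then 0 else (hat f T)^2) ≤ ((2:ℝ)^N)^2 * s / 2 := by
    have h2 : 2 * ∑ T : Finset ι, (if T = ∅ then 0 else (hat f T)^2)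
        ≤ ∑ T : Finset ι, ((T.card : ℝ)) * (hat f T)^2 := by
      rw [Finset.mul_sum]
      exact Finset.sum_le_sum (fun T _ => hlevel T)
    have h3 : ∑ T : Finset ι, ((T.card : ℝ)) * (hat f T)^2 ≤ ((2:ℝ)^N)^2 * s := by
      have := hweight
      have e : ∑ T : Finset ι, ((T.card : ℝ)) * (4 * (hat f T)^2)
          = 4 * ∑ T : Finset ι, ((T.card : ℝ)) * (hat f T)^2 := by
        rw [Finset.mul_sum]
        exact Finset.sum_congr rfl (fun T _ => by ring)
      rw [e] at this
      linarith
    linarith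
  have hparse : ∑ T : Finset ι, (hat f T)^2 = ((2:ℝ)^N)^2 * s := by
    rw [parseval]
    have : ∑ ε : ι → Bool, (f ε)^2 = ∑ ε : ι → Bool, (S ε)^2 :=
      Finset.sum_congr rfl (fun ε _ => by rw [hf]; exact sq_abs _)
    rw [this, hSsq]
    ring
  have hA2 : ((2:ℝ)^N)^2 * s / 2 ≤ (hat f ∅)^2 := by
    have : (hat f ∅)^2 = ∑ T : Finset ι, (hat f T)^2
        - ∑ T : Finset ι, (if T = ∅ then 0 else (hat f T)^2) := by
      rw [← hremain]; linarith [hsplit]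
    rw [this, hparse]
    linarith [hub]
  have hAeq : hat f ∅ = ∑ ε : ι → Bool, f ε := by
    rw [hat]
    refine Finset.sum_congr rfl (fun ε _ => ?_)
    rw [wal, Finset.prod_empty, mul_one]
  have hA0 : 0 ≤ hat f ∅ := by
    rw [hAeq]
    exact Finset.sum_nonneg (fun ε _ => by rw [hf]; exact abs_nonneg _)
  -- conclude
  have final : (2:ℝ)^N * Real.sqrt s ≤ Real.sqrt 2 * hat f ∅ := by
    have e1 : (2:ℝ)^N * Real.sqrt s = Real.sqrt (((2:ℝ)^N)^2 * s) := by
      rw [Real.sqrt_mul (sq_nonneg _), Real.sqrt_sq (by positivity)]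
    have e2 : Real.sqrt 2 * hat f ∅ = Real.sqrt (2 * (hat f ∅)^2) := by
      rw [Real.sqrt_mul (by norm_num), Real.sqrt_sq hA0]
    rw [e1, e2]
    apply Real.sqrt_le_sqrt
    nlinarith [hA2]
  calc (2:ℝ)^N * Real.sqrt s ≤ Real.sqrt 2 * hat f ∅ := final
    _ = Real.sqrt 2 * ∑ ε : ι → Bool, |∑ i, a i * sg (ε i)| := by rw [hAeq]

/-- L2 Minkowski / triangle inequality for finite families. -/
lemma l2_minkowski {α β : Type*} [Fintype α] [Fintype β] (g : α → β → ℝ) :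
    Real.sqrt (∑ b : β, (∑ a : α, g a b)^2) ≤ ∑ a : α, Real.sqrt (∑ b : β, (g a b)^2) := by
  classical
  let u : α → EuclideanSpace ℝ β := fun a => WithLp.toLp 2 (fun b => g a b)
  have hnorm : ∀ a, ‖u a‖ = Real.sqrt (∑ b : β, (g a b)^2) := by
    intro a
    rw [EuclideanSpace.norm_eq]
    congr 1
    exact Finset.sum_congr rfl (fun b _ => by rw [Real.norm_eq_abs, sq_abs])
  have hsum : ‖∑ a : α, u a‖ = Real.sqrt (∑ b : β, (∑ a : α, g a b)^2) := by
    rw [EuclideanSpace.norm_eq]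
    congr 1
    refine Finset.sum_congr rfl (fun b _ => ?_)
    rw [Real.norm_eq_abs, sq_abs]
    congr 1
    simp [u]
  calc Real.sqrt (∑ b : β, (∑ a : α, g a b)^2) = ‖∑ a : α, u a‖ := hsum.symm
    _ ≤ ∑ a : α, ‖u a‖ := norm_sum_le _ _
    _ = ∑ a : α, Real.sqrt (∑ b : β, (g a b)^2) :=
        Finset.sum_congr rfl (fun a _ => hnorm a)

/-- Multidimensional sharp Khinchine. -/
theorem khin (n : ℕ) : ∀ (k : ℕ) (c : (Fin k → Fin n) → ℝ),
    ((2:ℝ)^(n*k)) * Real.sqrt (∑ J : Fin k → Fin n, (c J)^2)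
      ≤ (Real.sqrt 2)^k *
        ∑ E : Fin k → (Fin n → Bool), |∑ J : Fin k → Fin n, (∏ t, sg (E t (J t))) * c J| := by
  intro k
  induction k with
  | zero =>
    intro c
    simp only [Nat.mul_zero, pow_zero, one_mul]
    have e1 : ∑ J : Fin 0 → Fin n, (c J)^2 = (c default)^2 := Fintype.sum_unique _
    have e2 : ∑ E : Fin 0 → Fin n → Bool,
        |∑ J : Fin 0 → Fin n, (∏ t : Fin 0, sg (E t (J t))) * c J|
        = |∑ J : Fin 0 → Fin n, (∏ t : Fin 0, sg ((default : Fin 0 → Fin n → Bool) t (J t))) * c J| :=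
      Fintype.sum_unique _
    have e3 : ∑ J : Fin 0 → Fin n, (∏ t : Fin 0, sg ((default : Fin 0 → Fin n → Bool) t (J t))) * c J
        = c default := by
      rw [Fintype.sum_unique]
      simp
    rw [e1, e2, e3, Real.sqrt_sq_eq_abs]
  | succ k IH =>
    intro c
    set cc : (Fin n → Bool) → (Fin k → Fin n) → ℝ :=
      fun ε v => ∑ j : Fin n, c (Fin.cons j v) * sg (ε j) with hcc
    -- (a) reindex the square sum
    have ha : ∑ J : Fin (k+1) → Fin n, (c J)^2
        = ∑ v : Fin k → Fin n, ∑ j : Fin n, (c (Fin.cons j v))^2 := by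
      rw [← (Fin.consEquiv (fun _ : Fin (k+1) => Fin n)).sum_comp (fun J => (c J)^2),
        Fintype.sum_prod_type]
      rw [Finset.sum_comm]
      rfl
    -- (b) scalar Szarek pointwise in v
    have hb : ∀ v : Fin k → Fin n, (2:ℝ)^n * Real.sqrt (∑ j : Fin n, (c (Fin.cons j v))^2)
        ≤ Real.sqrt 2 * ∑ ε : Fin n → Bool, |cc ε v| := by
      intro v
      have := szarek (ι := Fin n) (fun j => c (Fin.cons j v))
      rw [Fintype.card_fin] at this
      exact this
    have sqnn : ∀ v : Fin k → Fin n, (0:ℝ) ≤ ∑ j : Fin n, (c (Fin.cons j v))^2 :=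
      fun v => Finset.sum_nonneg (fun j _ => sq_nonneg _)
    have hc1 : ((2:ℝ)^(n*(k+1))) * Real.sqrt (∑ J : Fin (k+1) → Fin n, (c J)^2)
        = (2:ℝ)^(n*k) * Real.sqrt (∑ v : Fin k → Fin n,
            ((2:ℝ)^n * Real.sqrt (∑ j : Fin n, (c (Fin.cons j v))^2))^2) := by
      have e : ∀ v : Fin k → Fin n, ((2:ℝ)^n * Real.sqrt (∑ j : Fin n, (c (Fin.cons j v))^2))^2
          = ((2:ℝ)^n)^2 * (∑ j : Fin n, (c (Fin.cons j v))^2) := by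
        intro v
        rw [mul_pow, Real.sq_sqrt (sqnn v)]
      rw [Finset.sum_congr rfl (fun v _ => e v), ← Finset.mul_sum,
        Real.sqrt_mul (by positivity), Real.sqrt_sq (by positivity), ha]
      have : n*(k+1) = n*k + n := by ring
      rw [this, pow_add]
      ring
    have hc2 : Real.sqrt (∑ v : Fin k → Fin n,
          ((2:ℝ)^n * Real.sqrt (∑ j : Fin n, (c (Fin.cons j v))^2))^2)
        ≤ Real.sqrt (∑ v : Fin k → Fin n,
            (Real.sqrt 2 * ∑ ε : Fin n → Bool, |cc ε v|)^2) := by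
      apply Real.sqrt_le_sqrt
      apply Finset.sum_le_sum
      intro v _
      exact pow_le_pow_left₀ (by positivity) (hb v) 2
    have hc3 : Real.sqrt (∑ v : Fin k → Fin n,
          (Real.sqrt 2 * ∑ ε : Fin n → Bool, |cc ε v|)^2)
        = Real.sqrt 2 * Real.sqrt (∑ v : Fin k → Fin n,
            (∑ ε : Fin n → Bool, |cc ε v|)^2) := by
      have e : ∀ v : Fin k → Fin n, (Real.sqrt 2 * ∑ ε : Fin n → Bool, |cc ε v|)^2
          = 2 * (∑ ε : Fin n → Bool, |cc ε v|)^2 := by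
        intro v
        rw [mul_pow, Real.sq_sqrt (by norm_num)]
      rw [Finset.sum_congr rfl (fun v _ => e v), ← Finset.mul_sum,
        Real.sqrt_mul (by norm_num)]
    have hc4 : Real.sqrt (∑ v : Fin k → Fin n, (∑ ε : Fin n → Bool, |cc ε v|)^2)
        ≤ ∑ ε : Fin n → Bool, Real.sqrt (∑ v : Fin k → Fin n, (cc ε v)^2) := by
      have h := l2_minkowski (fun ε v => |cc ε v|)
      simpa [sq_abs] using h
    have hc6 : ∀ ε : Fin n → Bool, (2:ℝ)^(n*k) * Real.sqrt (∑ v : Fin k → Fin n, (cc ε v)^2)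
        ≤ (Real.sqrt 2)^k * ∑ E' : Fin k → (Fin n → Bool),
            |∑ v : Fin k → Fin n, (∏ t, sg (E' t (v t))) * cc ε v| :=
      fun ε => IH (cc ε)
    have hc7 : ∑ ε : Fin n → Bool, ∑ E' : Fin k → (Fin n → Bool),
          |∑ v : Fin k → Fin n, (∏ t, sg (E' t (v t))) * cc ε v|
        = ∑ E : Fin (k+1) → (Fin n → Bool),
          |∑ J : Fin (k+1) → Fin n, (∏ t, sg (E t (J t))) * c J| := by
      rw [← (Fin.consEquiv (fun _ : Fin (k+1) => (Fin n → Bool))).sum_comp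
          (fun E => |∑ J : Fin (k+1) → Fin n, (∏ t, sg (E t (J t))) * c J|),
        Fintype.sum_prod_type]
      refine Finset.sum_congr rfl (fun ε _ => Finset.sum_congr rfl (fun E' _ => ?_))
      congr 1
      have inner : ∀ v : Fin k → Fin n, (∏ t, sg (E' t (v t))) * cc ε v
          = ∑ j : Fin n, (∏ t : Fin (k+1),
              sg ((Fin.cons ε E' : Fin (k+1) → (Fin n → Bool)) t ((Fin.cons j v : Fin (k+1) → Fin n) t)))
              * c (Fin.cons j v) := by
        intro v
        rw [hcc, Finset.mul_sum]
        refine Finset.sum_congr rfl (fun j _ => ?_)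
        rw [Fin.prod_univ_succ]
        simp only [Fin.cons_zero, Fin.cons_succ]
        ring
      rw [Finset.sum_congr rfl (fun v _ => inner v), Finset.sum_comm]
      rw [← (Fin.consEquiv (fun _ : Fin (k+1) => Fin n)).sum_comp
          (fun J => (∏ t : Fin (k+1),
            sg ((Fin.consEquiv (fun _ : Fin (k+1) => (Fin n → Bool))) (ε, E') t (J t))) * c J),
        Fintype.sum_prod_type]
      rfl
    calc ((2:ℝ)^(n*(k+1))) * Real.sqrt (∑ J : Fin (k+1) → Fin n, (c J)^2)
        = (2:ℝ)^(n*k) * Real.sqrt (∑ v : Fin k → Fin n,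
            ((2:ℝ)^n * Real.sqrt (∑ j : Fin n, (c (Fin.cons j v))^2))^2) := hc1
      _ ≤ (2:ℝ)^(n*k) * Real.sqrt (∑ v : Fin k → Fin n,
            (Real.sqrt 2 * ∑ ε : Fin n → Bool, |cc ε v|)^2) :=
          mul_le_mul_of_nonneg_left hc2 (by positivity)
      _ = (2:ℝ)^(n*k) * (Real.sqrt 2 * Real.sqrt (∑ v : Fin k → Fin n,
            (∑ ε : Fin n → Bool, |cc ε v|)^2)) := by rw [hc3]
      _ ≤ (2:ℝ)^(n*k) * (Real.sqrt 2 *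
            ∑ ε : Fin n → Bool, Real.sqrt (∑ v : Fin k → Fin n, (cc ε v)^2)) := by
          apply mul_le_mul_of_nonneg_left _ (by positivity)
          exact mul_le_mul_of_nonneg_left hc4 (Real.sqrt_nonneg 2)
      _ = Real.sqrt 2 * ∑ ε : Fin n → Bool,
            (2:ℝ)^(n*k) * Real.sqrt (∑ v : Fin k → Fin n, (cc ε v)^2) := by
          rw [Finset.mul_sum]
          rw [Finset.mul_sum]
          rw [Finset.mul_sum]
          refine Finset.sum_congr rfl (fun ε _ => by ring)
      _ ≤ Real.sqrt 2 * ∑ ε : Fin n → Bool, ((Real.sqrt 2)^k * ∑ E' : Fin k → (Fin n → Bool),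
            |∑ v : Fin k → Fin n, (∏ t, sg (E' t (v t))) * cc ε v|) := by
          apply mul_le_mul_of_nonneg_left _ (Real.sqrt_nonneg 2)
          exact Finset.sum_le_sum (fun ε _ => hc6 ε)
      _ = (Real.sqrt 2)^(k+1) * ∑ ε : Fin n → Bool, ∑ E' : Fin k → (Fin n → Bool),
            |∑ v : Fin k → Fin n, (∏ t, sg (E' t (v t))) * cc ε v| := by
          rw [Finset.mul_sum, Finset.mul_sum]
          exact Finset.sum_congr rfl (fun ε _ => by rw [pow_succ]; ring)
      _ = (Real.sqrt 2)^(k+1) * ∑ E : Fin (k+1) → (Fin n → Bool),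
            |∑ J : Fin (k+1) → Fin n, (∏ t, sg (E t (J t))) * c J| := by rw [hc7]

end

end Stmt13

namespace Stmt13

noncomputable section

variable {m n M : ℕ}

lemma expand (T : MultilinearMap ℝ (fun _ : Fin m => (Fin n → ℝ)) ℝ) (x : Fin m → Fin n → ℝ) :
    T x = ∑ J : Fin m → Fin n, (∏ i, x i (J i)) * T (fun i => e n (J i)) := by
  have hx : x = fun i => ∑ j : Fin n, x i j • e n j := by
    funext i p
    rw [Finset.sum_apply]
    simp only [Pi.smul_apply, smul_eq_mul, e, mul_ite, mul_one, mul_zero]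
    rw [Finset.sum_ite_eq]
    simp
  conv_lhs => rw [hx]
  rw [T.map_sum]
  refine Finset.sum_congr rfl (fun J _ => ?_)
  rw [T.map_smul_univ]
  simp

lemma abs_coord_le {x : Fin n → ℝ} (hx : ‖x‖ ≤ 1) (j : Fin n) : |x j| ≤ 1 := by
  have := norm_le_pi_norm x j
  rw [Real.norm_eq_abs] at this
  linarith

lemma mem_snSet_zero (T : MultilinearMap ℝ (fun _ : Fin m => (Fin n → ℝ)) ℝ) :
    |T (fun _ => (0 : Fin n → ℝ))|
      ∈ {v : ℝ | ∃ x : Fin m → Fin n → ℝ, (∀ i, ‖x i‖ ≤ 1) ∧ v = |T x|} :=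
  ⟨fun _ => 0, fun _ => by simp, rfl⟩

lemma snSet_bddAbove (T : MultilinearMap ℝ (fun _ : Fin m => (Fin n → ℝ)) ℝ) :
    BddAbove {v : ℝ | ∃ x : Fin m → Fin n → ℝ, (∀ i, ‖x i‖ ≤ 1) ∧ v = |T x|} := by
  refine ⟨∑ J : Fin m → Fin n, |T (fun i => e n (J i))|, ?_⟩
  rintro v ⟨x, hx, rfl⟩
  rw [expand T x]
  calc |∑ J : Fin m → Fin n, (∏ i, x i (J i)) * T (fun i => e n (J i))|
      ≤ ∑ J : Fin m → Fin n, |(∏ i, x i (J i)) * T (fun i => e n (J i))| :=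
        Finset.abs_sum_le_sum_abs _ _
    _ ≤ ∑ J : Fin m → Fin n, |T (fun i => e n (J i))| := by
        refine Finset.sum_le_sum (fun J _ => ?_)
        rw [abs_mul]
        have h1 : |∏ i, x i (J i)| ≤ 1 := by
          rw [Finset.abs_prod]
          calc ∏ i, |x i (J i)| ≤ ∏ i : Fin m, 1 :=
              Finset.prod_le_prod (fun i _ => abs_nonneg _) (fun i _ => abs_coord_le (hx i) (J i))
            _ = 1 := Finset.prod_const_one
        nlinarith [abs_nonneg (T (fun i => e n (J i))), abs_nonneg (∏ i, x i (J i))]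

lemma le_supNorm (T : MultilinearMap ℝ (fun _ : Fin m => (Fin n → ℝ)) ℝ)
    (x : Fin m → Fin n → ℝ) (hx : ∀ i, ‖x i‖ ≤ 1) : |T x| ≤ supNorm m n T :=
  le_csSup (snSet_bddAbove T) ⟨x, hx, rfl⟩

lemma supNorm_nonneg (T : MultilinearMap ℝ (fun _ : Fin m => (Fin n → ℝ)) ℝ) :
    0 ≤ supNorm m n T :=
  le_trans (abs_nonneg _) (le_supNorm T (fun _ => 0) (fun _ => by simp))

lemma supNorm_le (T : MultilinearMap ℝ (fun _ : Fin m => (Fin n → ℝ)) ℝ) (B : ℝ)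
    (hB : ∀ x : Fin m → Fin n → ℝ, (∀ i, ‖x i‖ ≤ 1) → |T x| ≤ B) : supNorm m n T ≤ B :=
  csSup_le ⟨_, mem_snSet_zero T⟩ (by rintro v ⟨x, hx, rfl⟩; exact hB x hx)


lemma basis_expand (x : Fin n → ℝ) : x = ∑ j : Fin n, x j • e n j := by
  funext p
  rw [Finset.sum_apply]
  simp only [Pi.smul_apply, smul_eq_mul, e, mul_ite, mul_one, mul_zero]
  rw [Finset.sum_ite_eq]
  simp

lemma sum_cons_split {k : ℕ} (g : (Fin (k+1) → Fin n) → ℝ) :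
    ∑ u : Fin (k+1) → Fin n, g u
      = ∑ j : Fin n, ∑ v : Fin k → Fin n, g (Fin.cons j v) := by
  rw [← (Fin.consEquiv (fun _ : Fin (k+1) => Fin n)).sum_comp g, Fintype.sum_prod_type]
  rfl

/-- sign vector -/
def chi (ε : Fin n → Bool) : Fin n → ℝ := fun j => sg (ε j)

lemma chi_norm_le (ε : Fin n → Bool) : ‖chi (n := n) ε‖ ≤ 1 := by
  rw [pi_norm_le_iff_of_nonneg (by norm_num)]
  intro j
  rw [Real.norm_eq_abs, chi, abs_sg]

theorem membership (M n : ℕ) (T : MultilinearMap ℝ (fun _ : Fin (M + 2) => (Fin n → ℝ)) ℝ) :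
    (∑ j₁ : Fin n, (∑ j₂ : Fin n, (∑ idx : Fin M → Fin n,
        |T fun k => e n (Fin.cons (α := fun _ => Fin n) j₁
            (Fin.cons (α := fun _ => Fin n) j₂ idx) k)| ^ 2) ^ ((1:ℝ)/2)) ^ 2)
        ^ ((1:ℝ)/2)
      ≤ (2:ℝ) ^ (((M : ℝ) + 1) / 2) * supNorm (M + 2) n T := by
  classical
  set a : Fin n → Fin n → (Fin M → Fin n) → ℝ := fun j₁ j₂ v =>
    T (fun k => e n (Fin.cons (α := fun _ => Fin n) j₁
      (Fin.cons (α := fun _ => Fin n) j₂ v) k)) with ha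
  simp only [← Real.sqrt_eq_rpow, sq_abs]
  set c : Fin n → (Fin (M+1) → Fin n) → ℝ := fun j₂ u => a (u 0) j₂ (Fin.tail u) with hc
  have step1 : Real.sqrt (∑ j₁ : Fin n, (∑ j₂ : Fin n,
        Real.sqrt (∑ v : Fin M → Fin n, (a j₁ j₂ v)^2))^2)
      ≤ ∑ j₂ : Fin n, Real.sqrt (∑ u : Fin (M+1) → Fin n, (c j₂ u)^2) := by
    have h := l2_minkowski (α := Fin n) (β := Fin n)
      (fun j₂ j₁ => Real.sqrt (∑ v : Fin M → Fin n, (a j₁ j₂ v)^2))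
    calc Real.sqrt (∑ j₁ : Fin n, (∑ j₂ : Fin n,
          Real.sqrt (∑ v : Fin M → Fin n, (a j₁ j₂ v)^2))^2)
        ≤ ∑ j₂ : Fin n, Real.sqrt (∑ j₁ : Fin n,
            (Real.sqrt (∑ v : Fin M → Fin n, (a j₁ j₂ v)^2))^2) := h
      _ = ∑ j₂ : Fin n, Real.sqrt (∑ u : Fin (M+1) → Fin n, (c j₂ u)^2) := by
          refine Finset.sum_congr rfl (fun j₂ _ => ?_)
          congr 1
          rw [sum_cons_split (fun u => (c j₂ u)^2)]
          refine Finset.sum_congr rfl (fun j₁ _ => ?_)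
          rw [Real.sq_sqrt (Finset.sum_nonneg (fun v _ => sq_nonneg _))]
          refine Finset.sum_congr rfl (fun v _ => ?_)
          rw [hc]
          simp [Fin.tail_cons]
  set base : (Fin (M+1) → Fin n → Bool) → (Fin (M+2) → Fin n → ℝ) := fun E =>
    Fin.cons (α := fun _ => Fin n → ℝ) (chi (E 0))
      (Fin.cons (α := fun _ => Fin n → ℝ) (0 : Fin n → ℝ)
        (fun t => chi (E (Fin.succ t)))) with hbase
  set xbe : (Fin (M+1) → Fin n → Bool) → (Fin n → ℝ) → (Fin (M+2) → Fin n → ℝ) := fun E z =>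
    Function.update (base E) 1 z with hxbe
  have hxbe0 : ∀ E z, xbe E z 0 = chi (E 0) := by
    intro E z
    rw [hxbe]
    simp only [Function.update_of_ne (by simp [Fin.ext_iff] : (0 : Fin (M+2)) ≠ 1), hbase]
    rfl
  have hxbe1 : ∀ E z, xbe E z 1 = z := by
    intro E z
    rw [hxbe]
    simp
  have hxbe2 : ∀ E z (t : Fin M), xbe E z (Fin.succ (Fin.succ t)) = chi (E (Fin.succ t)) := by
    intro E z t
    have h1 : (Fin.succ (Fin.succ t) : Fin (M+2)) ≠ 1 := by
      simp [Fin.ext_iff]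
    rw [hxbe]
    simp only [Function.update_of_ne h1, hbase]
    rw [show ((Fin.succ (Fin.succ t)) : Fin (M+2)) = Fin.succ (Fin.succ t) from rfl]
    rw [Fin.cons_succ, Fin.cons_succ]
  have key : ∀ (E : Fin (M+1) → Fin n → Bool) (j₂ : Fin n),
      (∑ u : Fin (M+1) → Fin n, (∏ t, sg (E t (u t))) * c j₂ u) = T (xbe E (e n j₂)) := by
    intro E j₂
    have lhs_eq : (∑ u : Fin (M+1) → Fin n, (∏ t, sg (E t (u t))) * c j₂ u)
        = ∑ j₁ : Fin n, ∑ v : Fin M → Fin n,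
            (sg (E 0 j₁) * ∏ t, sg (E (Fin.succ t) (v t)))
              * T (fun i => e n ((Fin.cons j₁ (Fin.cons j₂ v) : Fin (M+2) → Fin n) i)) := by
      rw [sum_cons_split (fun u => (∏ t, sg (E t (u t))) * c j₂ u)]
      refine Finset.sum_congr rfl (fun j₁ _ => Finset.sum_congr rfl (fun v _ => ?_))
      have hprod : (∏ t : Fin (M+1), sg (E t ((Fin.cons j₁ v : Fin (M+1) → Fin n) t)))
          = sg (E 0 j₁) * ∏ t : Fin M, sg (E (Fin.succ t) (v t)) := by
        rw [Fin.prod_univ_succ]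
        simp [Fin.cons_succ]
      rw [hprod, hc]
      simp only [Fin.cons_zero, Fin.tail_cons]
      rfl
    have rhs_eq : T (xbe E (e n j₂))
        = ∑ j₁ : Fin n, ∑ v : Fin M → Fin n,
            (sg (E 0 j₁) * ∏ t, sg (E (Fin.succ t) (v t)))
              * T (fun i => e n ((Fin.cons j₁ (Fin.cons j₂ v) : Fin (M+2) → Fin n) i)) := by
      rw [expand T (xbe E (e n j₂))]
      rw [sum_cons_split (fun J => (∏ i, xbe E (e n j₂) i (J i)) * T (fun i => e n (J i)))]
      rw [Finset.sum_congr rfl (fun j₁ (_ : j₁ ∈ Finset.univ) => sum_cons_split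
        (fun w => (∏ i, xbe E (e n j₂) i ((Fin.cons j₁ w : Fin (M+2) → Fin n) i))
          * T (fun i => e n ((Fin.cons j₁ w : Fin (M+2) → Fin n) i))))]
      refine Finset.sum_congr rfl (fun j₁ _ => ?_)
      have inner : ∀ (q : Fin n) (v : Fin M → Fin n),
          (∏ i, xbe E (e n j₂) i ((Fin.cons j₁ (Fin.cons q v) : Fin (M+2) → Fin n) i))
          = (if q = j₂ then (1:ℝ) else 0)
            * (sg (E 0 j₁) * ∏ t, sg (E (Fin.succ t) (v t))) := by
        intro q v
        rw [Fin.prod_univ_succ, Fin.prod_univ_succ]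
        simp only [Fin.cons_zero, Fin.cons_succ]
        have h1 : xbe E (e n j₂) (Fin.succ 0) = e n j₂ := hxbe1 E _
        have h2 : ∀ t : Fin M, xbe E (e n j₂) (Fin.succ (Fin.succ t)) (v t)
            = sg (E (Fin.succ t) (v t)) := by
          intro t
          rw [hxbe2]
          rfl
        rw [hxbe0, h1]
        rw [Finset.prod_congr rfl (fun t (_ : t ∈ Finset.univ) => h2 t)]
        show chi (E 0) j₁ * ((e n j₂ q) * _) = _
        rw [chi, e]
        show sg (E 0 j₁) * ((if q = j₂ then (1:ℝ) else 0) * _) = _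
        ring
      rw [Finset.sum_congr rfl (fun q (_ : q ∈ Finset.univ) =>
        Finset.sum_congr rfl (fun v (_ : v ∈ Finset.univ) => by rw [inner q v]))]
      rw [Finset.sum_congr rfl (fun q (_ : q ∈ Finset.univ) =>
        Finset.sum_congr rfl (fun v (_ : v ∈ Finset.univ) => by
          rw [ite_mul, one_mul, zero_mul, ite_mul, zero_mul]))]
      rw [Finset.sum_comm]
      rw [Finset.sum_congr rfl (fun v (_ : v ∈ Finset.univ) =>
        Finset.sum_ite_eq' Finset.univ j₂ (fun q =>
          (sg (E 0 j₁) * ∏ t, sg (E (Fin.succ t) (v t)))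
            * T (fun i => e n ((Fin.cons j₁ (Fin.cons q v) : Fin (M+2) → Fin n) i))))]
      simp
    rw [lhs_eq, rhs_eq]
  -- norm bounds for the sign vectors
  have e_norm : ∀ j : Fin n, ‖e n j‖ ≤ 1 := by
    intro j
    rw [pi_norm_le_iff_of_nonneg (by norm_num)]
    intro p
    simp only [Real.norm_eq_abs, e]
    split <;> norm_num
  have normx : ∀ E (z : Fin n → ℝ), ‖z‖ ≤ 1 → ∀ i, ‖xbe E z i‖ ≤ 1 := by
    intro E z hz i
    by_cases hi : i = 1
    · subst hi
      rw [hxbe]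
      simpa using hz
    · rw [hxbe]
      simp only [Function.update_of_ne hi, hbase]
      induction i using Fin.cases with
      | zero => rw [Fin.cons_zero]; exact chi_norm_le _
      | succ i' =>
        rw [Fin.cons_succ]
        induction i' using Fin.cases with
        | zero => exact absurd rfl hi
        | succ t => rw [Fin.cons_succ]; exact chi_norm_le _
  have stepD : ∀ E : Fin (M+1) → Fin n → Bool,
      (∑ j₂ : Fin n, |T (xbe E (e n j₂))|) ≤ supNorm (M+2) n T := by
    intro E
    set W : Fin n → ℝ := fun j => T (xbe E (e n j)) with hW
    set τ : Fin n → ℝ := fun j => if 0 ≤ W j then 1 else -1 with hτ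
    have hτ1 : ∀ j, |τ j| ≤ 1 := by
      intro j
      rw [hτ]
      dsimp only
      split <;> norm_num
    have habs : ∀ j, |W j| = τ j * W j := by
      intro j
      rw [hτ]
      dsimp only
      split
      · rename_i h
        rw [abs_of_nonneg h, one_mul]
      · rename_i h
        rw [abs_of_neg (lt_of_not_ge h)]
        ring
    have hτnorm : ‖τ‖ ≤ 1 := by
      rw [pi_norm_le_iff_of_nonneg (by norm_num)]
      intro j
      rw [Real.norm_eq_abs]
      exact hτ1 j
    have hsum : ∑ j : Fin n, τ j * W j = T (xbe E τ) := by
      have hxz : xbe E τ = Function.update (base E) 1 (∑ j : Fin n, τ j • e n j) := by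
        rw [hxbe, ← basis_expand τ]
      rw [hxz, MultilinearMap.map_update_sum]
      refine Finset.sum_congr rfl (fun j _ => ?_)
      rw [MultilinearMap.map_update_smul, smul_eq_mul]
    calc ∑ j₂ : Fin n, |T (xbe E (e n j₂))| = ∑ j₂ : Fin n, τ j₂ * W j₂ :=
        Finset.sum_congr rfl (fun j₂ _ => habs j₂)
      _ = T (xbe E τ) := hsum
      _ ≤ |T (xbe E τ)| := le_abs_self _
      _ ≤ supNorm (M+2) n T := le_supNorm T _ (normx E τ hτnorm)
  -- assemble
  have kh : ∀ j₂ : Fin n, (2:ℝ)^(n*(M+1)) * Real.sqrt (∑ u : Fin (M+1) → Fin n, (c j₂ u)^2)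
      ≤ (Real.sqrt 2)^(M+1) * ∑ E : Fin (M+1) → (Fin n → Bool),
          |∑ u : Fin (M+1) → Fin n, (∏ t, sg (E t (u t))) * c j₂ u| :=
    fun j₂ => khin n (M+1) (c j₂)
  have cardE : ((Fintype.card (Fin (M+1) → Fin n → Bool) : ℕ) : ℝ) = 2^(n*(M+1)) := by
    rw [Fintype.card_fun, Fintype.card_fun, Fintype.card_bool, Fintype.card_fin,
      Fintype.card_fin]
    push_cast
    rw [← pow_mul]
  set X : ℝ := Real.sqrt (∑ j₁ : Fin n, (∑ j₂ : Fin n,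
      Real.sqrt (∑ v : Fin M → Fin n, (a j₁ j₂ v)^2))^2) with hX
  have main : (2:ℝ)^(n*(M+1)) * X
      ≤ (2:ℝ)^(n*(M+1)) * ((Real.sqrt 2)^(M+1) * supNorm (M+2) n T) := by
    calc (2:ℝ)^(n*(M+1)) * X
        ≤ (2:ℝ)^(n*(M+1)) * ∑ j₂ : Fin n,
            Real.sqrt (∑ u : Fin (M+1) → Fin n, (c j₂ u)^2) :=
          mul_le_mul_of_nonneg_left step1 (by positivity)
      _ = ∑ j₂ : Fin n, (2:ℝ)^(n*(M+1)) *
            Real.sqrt (∑ u : Fin (M+1) → Fin n, (c j₂ u)^2) := Finset.mul_sum _ _ _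
      _ ≤ ∑ j₂ : Fin n, (Real.sqrt 2)^(M+1) * ∑ E : Fin (M+1) → (Fin n → Bool),
            |∑ u : Fin (M+1) → Fin n, (∏ t, sg (E t (u t))) * c j₂ u| :=
          Finset.sum_le_sum (fun j₂ _ => kh j₂)
      _ = (Real.sqrt 2)^(M+1) * ∑ j₂ : Fin n, ∑ E : Fin (M+1) → (Fin n → Bool),
            |∑ u : Fin (M+1) → Fin n, (∏ t, sg (E t (u t))) * c j₂ u| :=
          (Finset.mul_sum _ _ _).symm
      _ = (Real.sqrt 2)^(M+1) * ∑ E : Fin (M+1) → (Fin n → Bool), ∑ j₂ : Fin n,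
            |T (xbe E (e n j₂))| := by
          rw [Finset.sum_comm]
          congr 1
          exact Finset.sum_congr rfl (fun E _ => Finset.sum_congr rfl (fun j₂ _ => by
            rw [key E j₂]))
      _ ≤ (Real.sqrt 2)^(M+1) * ∑ _E : Fin (M+1) → (Fin n → Bool), supNorm (M+2) n T := by
          apply mul_le_mul_of_nonneg_left _ (by positivity)
          exact Finset.sum_le_sum (fun E _ => stepD E)
      _ = (Real.sqrt 2)^(M+1) * ((2:ℝ)^(n*(M+1)) * supNorm (M+2) n T) := by
          rw [Finset.sum_const, nsmul_eq_mul, Finset.card_univ, cardE]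
      _ = (2:ℝ)^(n*(M+1)) * ((Real.sqrt 2)^(M+1) * supNorm (M+2) n T) := by ring
  have hfin : X ≤ (Real.sqrt 2)^(M+1) * supNorm (M+2) n T :=
    le_of_mul_le_mul_left main (by positivity)
  have hconst : (Real.sqrt 2)^(M+1) = (2:ℝ) ^ (((M:ℝ)+1)/2) := by
    rw [Real.sqrt_eq_rpow, ← Real.rpow_natCast ((2:ℝ)^((1:ℝ)/(2:ℝ)) : ℝ) (M+1),
      ← Real.rpow_mul (by norm_num)]
    congr 1
    push_cast
    ring
  rw [← hconst]
  exact hfin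

/-! ### The witness form for the lower bound -/

def n0 (M : ℕ) : ℕ := 2^(M+1)

lemma two_le_n0 (M : ℕ) : 2 ≤ n0 M := by
  have : (2:ℕ)^1 ≤ 2^(M+1) := Nat.pow_le_pow_right (by norm_num) (by omega)
  simpa [n0] using this

def emb (M : ℕ) : Fin 2 → Fin (n0 M) := Fin.castLE (two_le_n0 M)

lemma emb_inj (M : ℕ) : Function.Injective (emb M) := Fin.castLE_injective _

lemma emb_val (M : ℕ) (p : Fin 2) : ((emb M p : Fin (n0 M)) : ℕ) = (p : ℕ) := rfl

def enc (M : ℕ) : (Fin (M+1) → Fin 2) ≃ Fin (n0 M) := finFunctionFinEquiv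

def Hm : Fin 2 → Fin 2 → ℝ := fun p q => if p = 1 ∧ q = 1 then -1 else 1

lemma Hm_mul_self (p q : Fin 2) : Hm p q * Hm p q = 1 := by
  rw [Hm]
  split <;> norm_num

abbrev Trip (M : ℕ) := Fin 2 × (Fin (M+1) → Fin 2) × (Fin M → Fin 2)

def sgn (M : ℕ) (σ : Trip M) : ℝ :=
  Hm σ.1 (σ.2.1 0) * ∏ t : Fin M, Hm (σ.2.1 (Fin.succ t)) (σ.2.2 t)

lemma sgn_mul_self (M : ℕ) (σ : Trip M) : sgn M σ * sgn M σ = 1 := by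
  rw [sgn]
  have : (Hm σ.1 (σ.2.1 0) * ∏ t : Fin M, Hm (σ.2.1 (Fin.succ t)) (σ.2.2 t)) *
      (Hm σ.1 (σ.2.1 0) * ∏ t : Fin M, Hm (σ.2.1 (Fin.succ t)) (σ.2.2 t))
      = (Hm σ.1 (σ.2.1 0) * Hm σ.1 (σ.2.1 0)) *
        ∏ t : Fin M, (Hm (σ.2.1 (Fin.succ t)) (σ.2.2 t) * Hm (σ.2.1 (Fin.succ t)) (σ.2.2 t)) := by
    rw [Finset.prod_mul_distrib]
    ring
  rw [this, Hm_mul_self]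
  rw [Finset.prod_congr rfl (fun t _ => Hm_mul_self _ _)]
  simp

def bigJ (M : ℕ) (σ : Trip M) : Fin (M+2) → Fin (n0 M) :=
  Fin.cons (α := fun _ => Fin (n0 M)) (emb M σ.1)
    (Fin.cons (α := fun _ => Fin (n0 M)) (enc M σ.2.1) (fun t => emb M (σ.2.2 t)))

def prodMap (m n : ℕ) (J : Fin m → Fin n) : MultilinearMap ℝ (fun _ : Fin m => (Fin n → ℝ)) ℝ :=
  (MultilinearMap.mkPiAlgebra ℝ (Fin m) ℝ).compLinearMap (fun i => LinearMap.proj (J i))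

lemma prodMap_apply (m n : ℕ) (J : Fin m → Fin n) (x : Fin m → Fin n → ℝ) :
    prodMap m n J x = ∏ i, x i (J i) := by
  simp [prodMap]

noncomputable def W (M : ℕ) : MultilinearMap ℝ (fun _ : Fin (M+2) => (Fin (n0 M) → ℝ)) ℝ :=
  ∑ σ : Trip M, sgn M σ • prodMap (M+2) (n0 M) (bigJ M σ)

lemma W_apply (M : ℕ) (x : Fin (M+2) → Fin (n0 M) → ℝ) :
    W M x = ∑ σ : Trip M, sgn M σ * ∏ i, x i (bigJ M σ i) := by
  rw [W, MultilinearMap.sum_apply]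
  exact Finset.sum_congr rfl (fun σ _ => by
    rw [MultilinearMap.smul_apply, prodMap_apply, smul_eq_mul])

lemma prod_ind {m' : ℕ} (P : Fin m' → Prop) [DecidablePred P] :
    (∏ i, (if P i then (1:ℝ) else 0)) = if (∀ i, P i) then 1 else 0 := by
  by_cases h : ∀ i, P i
  · rw [if_pos h]
    rw [Finset.prod_congr rfl (fun i _ => if_pos (h i))]
    simp
  · rw [if_neg h]
    push_neg at h
    obtain ⟨i, hi⟩ := h
    exact Finset.prod_eq_zero (Finset.mem_univ i) (if_neg hi)

lemma W_coef (M : ℕ) (J : Fin (M+2) → Fin (n0 M)) :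
    W M (fun i => e (n0 M) (J i))
      = ∑ σ : Trip M, sgn M σ * (if bigJ M σ = J then 1 else 0) := by
  rw [W_apply]
  refine Finset.sum_congr rfl (fun σ _ => ?_)
  congr 1
  have : ∀ i, e (n0 M) (J i) (bigJ M σ i) = if bigJ M σ i = J i then (1:ℝ) else 0 := by
    intro i
    rw [e]
  rw [Finset.prod_congr rfl (fun i _ => this i), prod_ind]
  have : (∀ i, bigJ M σ i = J i) ↔ bigJ M σ = J := funext_iff.symm
  simp only [this]

lemma cons_eq_iff {k : ℕ} {α : Type*} (a a' : α) (u u' : Fin k → α) :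
    (Fin.cons (α := fun _ => α) a u = Fin.cons (α := fun _ => α) a' u') ↔ (a = a' ∧ u = u') := by
  constructor
  · intro h
    constructor
    · have := congrFun h 0
      simpa using this
    · funext t
      have := congrFun h (Fin.succ t)
      simpa using this
  · rintro ⟨rfl, rfl⟩
    rfl

lemma bigJ_eq_iff (M : ℕ) (σ : Trip M) (j₁ j₂ : Fin (n0 M)) (v : Fin M → Fin (n0 M)) :
    bigJ M σ = Fin.cons (α := fun _ => Fin (n0 M)) j₁ (Fin.cons (α := fun _ => Fin (n0 M)) j₂ v)
      ↔ (emb M σ.1 = j₁ ∧ enc M σ.2.1 = j₂ ∧ ∀ t, emb M (σ.2.2 t) = v t) := by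
  rw [bigJ, cons_eq_iff, cons_eq_iff, funext_iff]

lemma sum_pi_prod {ι κ : Type*} [Fintype ι] [DecidableEq ι] [Fintype κ] (g : ι → κ → ℝ) :
    ∑ f : ι → κ, ∏ i, g i (f i) = ∏ i, ∑ q, g i q := by
  rw [Finset.prod_univ_sum, ← Fintype.piFinset_univ]

lemma W_sq (M : ℕ) (j₁ j₂ : Fin (n0 M)) (v : Fin M → Fin (n0 M)) :
    (W M (fun i => e (n0 M) (Fin.cons (α := fun _ => Fin (n0 M)) j₁
        (Fin.cons (α := fun _ => Fin (n0 M)) j₂ v) i)))^2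
      = if (((j₁:ℕ) < 2) ∧ ∀ t, ((v t : ℕ) < 2)) then 1 else 0 := by
  rw [W_coef]
  by_cases h : (((j₁:ℕ) < 2) ∧ ∀ t, ((v t : ℕ) < 2))
  · obtain ⟨h1, hv⟩ := h
    set σ₀ : Trip M := (⟨(j₁ : ℕ), h1⟩, (enc M).symm j₂, fun t => ⟨((v t : ℕ)), hv t⟩) with hσ₀
    have hm1 : emb M σ₀.1 = j₁ := Fin.ext rfl
    have hm2 : enc M σ₀.2.1 = j₂ := (enc M).apply_symm_apply j₂
    have hm3 : ∀ t, emb M (σ₀.2.2 t) = v t := fun t => Fin.ext rfl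
    have hmatch : bigJ M σ₀ = Fin.cons (α := fun _ => Fin (n0 M)) j₁
        (Fin.cons (α := fun _ => Fin (n0 M)) j₂ v) :=
      (bigJ_eq_iff M σ₀ j₁ j₂ v).mpr ⟨hm1, hm2, hm3⟩
    have huniq : ∀ σ ∈ (Finset.univ : Finset (Trip M)), σ ≠ σ₀ →
        sgn M σ * (if bigJ M σ = Fin.cons (α := fun _ => Fin (n0 M)) j₁
          (Fin.cons (α := fun _ => Fin (n0 M)) j₂ v) then (1:ℝ) else 0) = 0 := by
      intro σ _ hne
      rw [if_neg, mul_zero]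
      intro hEq
      apply hne
      obtain ⟨e1, e2, e3⟩ := (bigJ_eq_iff M σ j₁ j₂ v).mp hEq
      obtain ⟨p, b, w⟩ := σ
      have hp : p = σ₀.1 := emb_inj M (e1.trans hm1.symm)
      have hb : b = σ₀.2.1 := (enc M).injective (e2.trans hm2.symm)
      have hw : w = σ₀.2.2 := funext (fun t => emb_inj M ((e3 t).trans (hm3 t).symm))
      rw [Prod.ext_iff, Prod.ext_iff]
      exact ⟨hp, hb, hw⟩
    rw [Finset.sum_eq_single_of_mem σ₀ (Finset.mem_univ _) huniq]
    rw [if_pos hmatch, mul_one, if_pos ⟨h1, hv⟩, sq, sgn_mul_self]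
  · rw [if_neg h]
    have hz : ∀ σ : Trip M, sgn M σ * (if bigJ M σ = Fin.cons (α := fun _ => Fin (n0 M)) j₁
        (Fin.cons (α := fun _ => Fin (n0 M)) j₂ v) then (1:ℝ) else 0) = 0 := by
      intro σ
      rw [if_neg, mul_zero]
      intro hEq
      obtain ⟨e1, e2, e3⟩ := (bigJ_eq_iff M σ j₁ j₂ v).mp hEq
      apply h
      constructor
      · rw [← e1]
        exact σ.1.isLt
      · intro t
        rw [← (e3 t)]
        exact (σ.2.2 t).isLt
    rw [Finset.sum_congr rfl (fun σ _ => hz σ)]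
    simp

lemma count_small (M : ℕ) : ∑ j : Fin (n0 M), (if ((j:ℕ) < 2) then (1:ℝ) else 0) = 2 := by
  rw [Fin.sum_univ_eq_sum_range (fun i => if i < 2 then (1:ℝ) else 0)]
  rw [← Finset.sum_subset (Finset.range_subset_range.mpr (two_le_n0 M))
    (by intro x _ hx; rw [Finset.mem_range, not_lt] at hx; rw [if_neg (by omega)])]
  rw [Finset.sum_range_succ, Finset.sum_range_succ]
  norm_num

lemma count_v (M : ℕ) :
    ∑ v : Fin M → Fin (n0 M), (if (∀ t, ((v t : ℕ) < 2)) then (1:ℝ) else 0) = 2^M := by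
  rw [Finset.sum_congr rfl (fun v (_ : v ∈ Finset.univ) => (prod_ind (fun t => ((v t : ℕ) < 2))).symm)]
  rw [sum_pi_prod (fun (t : Fin M) (j : Fin (n0 M)) => if ((j:ℕ) < 2) then (1:ℝ) else 0)]
  rw [Finset.prod_congr rfl (fun t (_ : t ∈ Finset.univ) => count_small M)]
  simp

lemma ite_const_mul (P : Prop) [Decidable P] (c : ℝ) :
    (if P then c else 0) = c * (if P then 1 else 0) := by
  split <;> ring

lemma W_lhs (M : ℕ) :
    (∑ j₁ : Fin (n0 M), (∑ j₂ : Fin (n0 M), (∑ idx : Fin M → Fin (n0 M),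
        |W M fun k => e (n0 M) (Fin.cons (α := fun _ => Fin (n0 M)) j₁
            (Fin.cons (α := fun _ => Fin (n0 M)) j₂ idx) k)| ^ 2) ^ ((1:ℝ)/2)) ^ 2)
        ^ ((1:ℝ)/2)
      = Real.sqrt ((2:ℝ)^(3*M+3)) := by
  simp only [← Real.sqrt_eq_rpow, sq_abs]
  have hinner : ∀ j₁ j₂ : Fin (n0 M),
      (∑ idx : Fin M → Fin (n0 M), (W M fun k => e (n0 M)
          (Fin.cons (α := fun _ => Fin (n0 M)) j₁
            (Fin.cons (α := fun _ => Fin (n0 M)) j₂ idx) k))^2)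
        = if ((j₁:ℕ) < 2) then (2:ℝ)^M else 0 := by
    intro j₁ j₂
    rw [Finset.sum_congr rfl (fun v (_ : v ∈ Finset.univ) => W_sq M j₁ j₂ v)]
    by_cases h1 : (j₁:ℕ) < 2
    · rw [if_pos h1]
      have e1 : ∀ v : Fin M → Fin (n0 M),
          (if (((j₁:ℕ) < 2) ∧ ∀ t, ((v t : ℕ) < 2)) then (1:ℝ) else 0)
            = if (∀ t, ((v t:ℕ) < 2)) then 1 else 0 := by
        intro v
        by_cases hv : ∀ t, ((v t:ℕ) < 2)
        · rw [if_pos ⟨h1, hv⟩, if_pos hv]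
        · rw [if_neg (fun hc => hv hc.2), if_neg hv]
      rw [Finset.sum_congr rfl (fun v _ => e1 v), count_v]
    · rw [if_neg h1]
      rw [Finset.sum_congr rfl (fun v (_ : v ∈ Finset.univ) =>
        if_neg (fun hc => h1 hc.1))]
      simp
  rw [Finset.sum_congr rfl (fun j₁ (_ : j₁ ∈ Finset.univ) => by
    rw [Finset.sum_congr rfl (fun j₂ (_ : j₂ ∈ Finset.univ) => by rw [hinner j₁ j₂])])]
  have hsq : ∀ j₁ : Fin (n0 M),
      (∑ _j₂ : Fin (n0 M), Real.sqrt (if ((j₁:ℕ) < 2) then (2:ℝ)^M else 0))^2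
        = if ((j₁:ℕ) < 2) then ((n0 M : ℝ))^2 * (2:ℝ)^M else 0 := by
    intro j₁
    rw [Finset.sum_const, nsmul_eq_mul, Finset.card_univ, Fintype.card_fin]
    by_cases h1 : (j₁:ℕ) < 2
    · rw [if_pos h1, if_pos h1, mul_pow, Real.sq_sqrt (by positivity)]
    · rw [if_neg h1, if_neg h1, Real.sqrt_zero, mul_zero]
      norm_num
  rw [Finset.sum_congr rfl (fun j₁ (_ : j₁ ∈ Finset.univ) => hsq j₁)]
  rw [Finset.sum_congr rfl (fun j₁ (_ : j₁ ∈ Finset.univ) =>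
    ite_const_mul _ (((n0 M : ℝ))^2 * (2:ℝ)^M))]
  rw [← Finset.mul_sum, count_small]
  congr 1
  have : ((n0 M : ℝ)) = 2^(M+1) := by
    rw [n0]
    push_cast
    rfl
  rw [this, ← pow_mul]
  ring

lemma two_pt (u v : ℝ) (hu : |u| ≤ 1) (hv : |v| ≤ 1) : |u + v| + |u - v| ≤ 2 := by
  rw [abs_le] at hu hv
  rcases abs_cases (u+v) with ⟨h1, _⟩ | ⟨h1, _⟩ <;>
    rcases abs_cases (u-v) with ⟨h2, _⟩ | ⟨h2, _⟩ <;>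
    rw [h1, h2] <;> linarith

lemma W_norm (M : ℕ) : supNorm (M+2) (n0 M) (W M) ≤ 2^(M+1) := by
  apply supNorm_le
  intro x hx
  have hprod : ∀ σ : Trip M, (∏ i, x i (bigJ M σ i))
      = x 0 (emb M σ.1) * (x 1 (enc M σ.2.1)
          * ∏ t, x (Fin.succ (Fin.succ t)) (emb M (σ.2.2 t))) := by
    intro σ
    rw [Fin.prod_univ_succ, Fin.prod_univ_succ]
    simp [bigJ, Fin.cons_succ]
  have hfact : W M x = ∑ b : Fin (M+1) → Fin 2,
      (x 1 (enc M b)) * ((∑ p : Fin 2, Hm p (b 0) * x 0 (emb M p)) *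
        ∏ t : Fin M, (∑ q : Fin 2, Hm (b (Fin.succ t)) q
          * x (Fin.succ (Fin.succ t)) (emb M q))) := by
    rw [W_apply, Fintype.sum_prod_type]
    rw [Finset.sum_congr rfl (fun p (_ : p ∈ Finset.univ) => Fintype.sum_prod_type
      (f := fun bw => sgn M (p, bw) * ∏ i, x i (bigJ M (p, bw) i)))]
    rw [Finset.sum_comm]
    refine Finset.sum_congr rfl (fun b _ => ?_)
    have inner_w : ∀ p : Fin 2, ∑ w : Fin M → Fin 2,
        sgn M (p, b, w) * ∏ i, x i (bigJ M (p, b, w) i)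
        = (Hm p (b 0) * x 0 (emb M p)) * (x 1 (enc M b) *
            ∏ t : Fin M, (∑ q : Fin 2, Hm (b (Fin.succ t)) q
              * x (Fin.succ (Fin.succ t)) (emb M q))) := by
      intro p
      have e1 : ∀ w : Fin M → Fin 2, sgn M (p, b, w) * ∏ i, x i (bigJ M (p, b, w) i)
          = (Hm p (b 0) * x 0 (emb M p)) * (x 1 (enc M b) *
              ∏ t : Fin M, (Hm (b (Fin.succ t)) (w t)
                * x (Fin.succ (Fin.succ t)) (emb M (w t)))) := by
        intro w
        rw [hprod, sgn, Finset.prod_mul_distrib]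
        ring
      rw [Finset.sum_congr rfl (fun w _ => e1 w), ← Finset.mul_sum]
      congr 1
      rw [← Finset.mul_sum]
      congr 1
      exact sum_pi_prod (fun (t : Fin M) (q : Fin 2) =>
        Hm (b (Fin.succ t)) q * x (Fin.succ (Fin.succ t)) (emb M q))
    rw [Finset.sum_congr rfl (fun p _ => inner_w p), ← Finset.sum_mul]
    ring
  rw [hfact]
  set F : Fin (M+1) → Fin 2 → ℝ := Fin.cons
      (fun q => |∑ p : Fin 2, Hm p q * x 0 (emb M p)|)
      (fun t q => |∑ q' : Fin 2, Hm q q' * x (Fin.succ (Fin.succ t)) (emb M q')|) with hF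
  have hFbound : ∀ s : Fin (M+1), ∑ q : Fin 2, F s q ≤ 2 := by
    intro s
    induction s using Fin.cases with
    | zero =>
      rw [Fin.sum_univ_two, hF]
      simp only [Fin.cons_zero]
      have h0 : ∑ p : Fin 2, Hm p 0 * x 0 (emb M p)
          = x 0 (emb M 0) + x 0 (emb M 1) := by
        rw [Fin.sum_univ_two]
        norm_num [Hm]
      have h1 : ∑ p : Fin 2, Hm p 1 * x 0 (emb M p)
          = x 0 (emb M 0) - x 0 (emb M 1) := by
        rw [Fin.sum_univ_two]
        norm_num [Hm]
        ring
      rw [h0, h1]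
      exact two_pt _ _ (abs_coord_le (hx 0) _) (abs_coord_le (hx 0) _)
    | succ t =>
      rw [Fin.sum_univ_two, hF]
      simp only [Fin.cons_succ]
      have h0 : ∑ q' : Fin 2, Hm 0 q' * x (Fin.succ (Fin.succ t)) (emb M q')
          = x (Fin.succ (Fin.succ t)) (emb M 0) + x (Fin.succ (Fin.succ t)) (emb M 1) := by
        rw [Fin.sum_univ_two]
        norm_num [Hm]
      have h1 : ∑ q' : Fin 2, Hm 1 q' * x (Fin.succ (Fin.succ t)) (emb M q')
          = x (Fin.succ (Fin.succ t)) (emb M 0) - x (Fin.succ (Fin.succ t)) (emb M 1) := by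
        rw [Fin.sum_univ_two]
        norm_num [Hm]
        ring
      rw [h0, h1]
      exact two_pt _ _ (abs_coord_le (hx _) _) (abs_coord_le (hx _) _)
  calc |∑ b : Fin (M+1) → Fin 2, (x 1 (enc M b)) * ((∑ p : Fin 2, Hm p (b 0) * x 0 (emb M p)) *
        ∏ t : Fin M, (∑ q : Fin 2, Hm (b (Fin.succ t)) q
          * x (Fin.succ (Fin.succ t)) (emb M q)))|
      ≤ ∑ b : Fin (M+1) → Fin 2, |(x 1 (enc M b)) * ((∑ p : Fin 2, Hm p (b 0) * x 0 (emb M p)) *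
          ∏ t : Fin M, (∑ q : Fin 2, Hm (b (Fin.succ t)) q
            * x (Fin.succ (Fin.succ t)) (emb M q)))| := Finset.abs_sum_le_sum_abs _ _
    _ ≤ ∑ b : Fin (M+1) → Fin 2, ∏ s : Fin (M+1), F s (b s) := by
        refine Finset.sum_le_sum (fun b _ => ?_)
        rw [abs_mul, abs_mul, Finset.abs_prod]
        have hx1 : |x 1 (enc M b)| ≤ 1 := abs_coord_le (hx 1) _
        have hprodF : ∏ s : Fin (M+1), F s (b s)
            = F 0 (b 0) * ∏ t : Fin M, F (Fin.succ t) (b (Fin.succ t)) := by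
          rw [Fin.prod_univ_succ]
        rw [hprodF, hF]
        simp only [Fin.cons_zero, Fin.cons_succ]
        have hrest : (0:ℝ) ≤ |∑ p : Fin 2, Hm p (b 0) * x 0 (emb M p)| *
            ∏ t : Fin M, |∑ q : Fin 2, Hm (b (Fin.succ t)) q
              * x (Fin.succ (Fin.succ t)) (emb M q)| := by positivity
        nlinarith [abs_nonneg (x 1 (enc M b))]
    _ = ∏ s : Fin (M+1), ∑ q : Fin 2, F s q :=
        sum_pi_prod (fun (s : Fin (M+1)) (q : Fin 2) => F s q)
    _ ≤ ∏ _s : Fin (M+1), (2:ℝ) := by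
        apply Finset.prod_le_prod
        · intro s _
          apply Finset.sum_nonneg
          intro q _
          induction s using Fin.cases with
          | zero => rw [hF]; simp only [Fin.cons_zero]; positivity
          | succ t => rw [hF]; simp only [Fin.cons_succ]; positivity
        · intro s _
          exact hFbound s
    _ = 2^(M+1) := by
        rw [Finset.prod_const, Finset.card_univ, Fintype.card_fin]

lemma sqrt_two_pow (k : ℕ) : Real.sqrt ((2:ℝ)^k) = (2:ℝ) ^ (((k:ℝ))/2) := by
  rw [Real.sqrt_eq_rpow, ← Real.rpow_natCast 2 k, ← Real.rpow_mul (by norm_num)]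
  congr 1
  ring

end

end Stmt13


/-- For the multiple exponent `(2,1,2,...,2)` (with `m = M + 2` entries), the
optimal constant of the real mixed `(ℓ₁,ℓ₂)`-Littlewood inequality — the least
`C` such that
`(Σ_{j₁}(Σ_{j₂}(Σ_{j₃,...,j_m}|T(e_{j₁},...,e_{j_m})|²)^{1/2})²)^{1/2} ≤ C‖T‖`
for all real `m`-linear forms on `(ℓ∞ⁿ)^m` and all `n` — is `2^{(m-1)/2}`. -/
theorem stmt_13 (M : ℕ) :
    IsLeast {C : ℝ |
        ∀ n : ℕ, ∀ T : MultilinearMap ℝ (fun _ : Fin (M + 2) => (Fin n → ℝ)) ℝ,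
          (∑ j₁ : Fin n, (∑ j₂ : Fin n, (∑ idx : Fin M → Fin n,
              |T fun k => e n (Fin.cons (α := fun _ => Fin n) j₁
                  (Fin.cons (α := fun _ => Fin n) j₂ idx) k)| ^ 2) ^ ((1:ℝ)/2)) ^ 2)
              ^ ((1:ℝ)/2)
            ≤ C * supNorm (M + 2) n T}
      ((2:ℝ) ^ (((M : ℝ) + 1) / 2)) := by
  constructor
  · intro n T
    exact Stmt13.membership M n T
  · intro C hC
    have h := hC (Stmt13.n0 M) (Stmt13.W M)
    rw [Stmt13.W_lhs M] at h
    have hW := Stmt13.W_norm M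
    have hsupnn := Stmt13.supNorm_nonneg (Stmt13.W M)
    have hpos : (0:ℝ) < Real.sqrt ((2:ℝ)^(3*M+3)) := Real.sqrt_pos.mpr (by positivity)
    have hCpos : 0 < C := by
      by_contra hc
      push_neg at hc
      have : C * supNorm (M+2) (Stmt13.n0 M) (Stmt13.W M) ≤ 0 :=
        mul_nonpos_of_nonpos_of_nonneg hc hsupnn
      linarith
    have h2 : Real.sqrt ((2:ℝ)^(3*M+3)) ≤ C * 2^(M+1) :=
      le_trans h (mul_le_mul_of_nonneg_left hW hCpos.le)
    have hdecomp : Real.sqrt ((2:ℝ)^(3*M+3)) = (2:ℝ) ^ (((M:ℝ)+1)/2) * 2^(M+1) := by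
      have e1 : (3*M+3 : ℕ) = (M+1) + (2*M+2) := by ring
      rw [e1, pow_add, Real.sqrt_mul (by positivity), Stmt13.sqrt_two_pow]
      have e2 : ((2:ℝ))^(2*M+2) = ((2:ℝ)^(M+1))^2 := by
        rw [← pow_mul]
        congr 1
        ring
      rw [e2, Real.sqrt_sq (by positivity)]
      congr 2
      push_cast
      ring
    rw [hdecomp] at h2
    have hppos : (0:ℝ) < 2^(M+1) := by positivity
    exact le_of_mul_le_mul_right h2 hppos
end

section
/- If m = 3 and q = (α, β, γ) ∈ [1,2]³ with 1/α + 1/β + 1/γ = 2, then any constant C satisfying (Σ_{j₁}(Σ_{j₂}(Σ_{j₃}|T(e_{j₁},e_{j₂},e_{j₃})|^γ)^{β/γ})^{α/β})^{1/α} ≤ C‖T‖ for all real trilinear forms T on (ℓ∞ⁿ)³ and all n satisfies C ≥ 2^{(2βγ + αβ + αγ - 2αβγ)/(αβγ)}. -/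
noncomputable def mono (a b c : Fin 4) :
    MultilinearMap ℝ (fun _ : Fin 3 => (Fin 4 → ℝ)) ℝ :=
  (MultilinearMap.mkPiAlgebra ℝ (Fin 3) ℝ).compLinearMap
    (fun i => LinearMap.proj (![a, b, c] i))

lemma mono_apply (a b c : Fin 4) (x : Fin 3 → Fin 4 → ℝ) :
    mono a b c x = x 0 a * x 1 b * x 2 c := by
  simp [mono, Fin.prod_univ_three]

noncomputable def T3 : MultilinearMap ℝ (fun _ : Fin 3 => (Fin 4 → ℝ)) ℝ :=
  mono 0 0 0 + mono 0 1 0 + mono 1 0 0 - mono 1 1 0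
  + mono 0 0 1 + mono 0 1 1 + mono 1 0 1 - mono 1 1 1
  + mono 2 2 0 + mono 2 3 0 + mono 3 2 0 - mono 3 3 0
  - mono 2 2 1 - mono 2 3 1 - mono 3 2 1 + mono 3 3 1

lemma T3_apply (x : Fin 3 → Fin 4 → ℝ) :
    T3 x = (x 2 0 + x 2 1) * (x 0 0 * (x 1 0 + x 1 1) + x 0 1 * (x 1 0 - x 1 1))
      + (x 2 0 - x 2 1) * (x 0 2 * (x 1 2 + x 1 3) + x 0 3 * (x 1 2 - x 1 3)) := by
  simp only [T3, MultilinearMap.add_apply, MultilinearMap.sub_apply, mono_apply]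
  ring

lemma fv2 : ((2 : Fin 4) : ℕ) = 2 := rfl
lemma fv3 : ((3 : Fin 4) : ℕ) = 3 := rfl

lemma T3_basis (a b c : Fin 4) : |T3 ![e 4 a, e 4 b, e 4 c]| =
    if ((a = 0 ∨ a = 1) ∧ (b = 0 ∨ b = 1) ∨ (a = 2 ∨ a = 3) ∧ (b = 2 ∨ b = 3))
        ∧ (c = 0 ∨ c = 1) then 1 else 0 := by
  fin_cases a <;> fin_cases b <;> fin_cases c <;>
    norm_num [T3_apply, e, Matrix.vecHead, Matrix.vecTail, Fin.ext_iff, fv2, fv3, Matrix.cons_val_two, Matrix.cons_val_one, Matrix.cons_val_zero]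

lemma pm2 (u v : ℝ) (hu : |u| ≤ 1) (hv : |v| ≤ 1) : |u + v| + |u - v| ≤ 2 := by
  rw [abs_le] at hu hv
  rcases abs_cases (u + v) with ⟨h1, _⟩ | ⟨h1, _⟩ <;>
    rcases abs_cases (u - v) with ⟨h2, _⟩ | ⟨h2, _⟩ <;> linarith

/-- Trilinear lower bound: for `(α,β,γ) ∈ [1,2]³` with `1/α+1/β+1/γ = 2`, any
constant `C` in the mixed-norm trilinear inequality with exponents `(α,β,γ)`
satisfies `C ≥ 2^{(2βγ + αβ + αγ - 2αβγ)/(αβγ)}`. -/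
theorem stmt_14 (α β γ : ℝ) (hα : α ∈ Set.Icc (1:ℝ) 2) (hβ : β ∈ Set.Icc (1:ℝ) 2)
    (hγ : γ ∈ Set.Icc (1:ℝ) 2) (hsum : 1/α + 1/β + 1/γ = 2) (C : ℝ)
    (hC : ∀ n : ℕ, ∀ T : MultilinearMap ℝ (fun _ : Fin 3 => (Fin n → ℝ)) ℝ,
      (∑ j₁ : Fin n, (∑ j₂ : Fin n, (∑ j₃ : Fin n,
          |T ![e n j₁, e n j₂, e n j₃]| ^ γ) ^ (β / γ)) ^ (α / β)) ^ (1 / α)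
        ≤ C * supNorm 3 n T) :
    (2:ℝ) ^ ((2*β*γ + α*β + α*γ - 2*α*β*γ) / (α*β*γ)) ≤ C := by
  have hαpos : (0:ℝ) < α := lt_of_lt_of_le one_pos hα.1
  have hβpos : (0:ℝ) < β := lt_of_lt_of_le one_pos hβ.1
  have hγpos : (0:ℝ) < γ := lt_of_lt_of_le one_pos hγ.1
  have hγne : γ ≠ 0 := ne_of_gt hγpos
  have hβγne : β / γ ≠ 0 := ne_of_gt (div_pos hβpos hγpos)
  -- sup-norm bound
  have hbound : ∀ x : Fin 3 → Fin 4 → ℝ, (∀ i, ‖x i‖ ≤ 1) → |T3 x| ≤ 4 := by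
    intro x hx
    have hxij : ∀ i j, |x i j| ≤ 1 := by
      intro i j
      calc |x i j| = ‖x i j‖ := (Real.norm_eq_abs _).symm
        _ ≤ ‖x i‖ := norm_le_pi_norm (x i) j
        _ ≤ 1 := hx i
    have hA : |x 0 0 * (x 1 0 + x 1 1) + x 0 1 * (x 1 0 - x 1 1)| ≤ 2 := by
      calc |x 0 0 * (x 1 0 + x 1 1) + x 0 1 * (x 1 0 - x 1 1)|
          ≤ |x 0 0 * (x 1 0 + x 1 1)| + |x 0 1 * (x 1 0 - x 1 1)| := abs_add_le _ _
        _ = |x 0 0| * |x 1 0 + x 1 1| + |x 0 1| * |x 1 0 - x 1 1| := by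
            rw [abs_mul, abs_mul]
        _ ≤ 1 * |x 1 0 + x 1 1| + 1 * |x 1 0 - x 1 1| := by
            gcongr <;> [exact hxij 0 0; exact hxij 0 1]
        _ = |x 1 0 + x 1 1| + |x 1 0 - x 1 1| := by ring
        _ ≤ 2 := pm2 _ _ (hxij 1 0) (hxij 1 1)
    have hB : |x 0 2 * (x 1 2 + x 1 3) + x 0 3 * (x 1 2 - x 1 3)| ≤ 2 := by
      calc |x 0 2 * (x 1 2 + x 1 3) + x 0 3 * (x 1 2 - x 1 3)|
          ≤ |x 0 2 * (x 1 2 + x 1 3)| + |x 0 3 * (x 1 2 - x 1 3)| := abs_add_le _ _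
        _ = |x 0 2| * |x 1 2 + x 1 3| + |x 0 3| * |x 1 2 - x 1 3| := by
            rw [abs_mul, abs_mul]
        _ ≤ 1 * |x 1 2 + x 1 3| + 1 * |x 1 2 - x 1 3| := by
            gcongr <;> [exact hxij 0 2; exact hxij 0 3]
        _ = |x 1 2 + x 1 3| + |x 1 2 - x 1 3| := by ring
        _ ≤ 2 := pm2 _ _ (hxij 1 2) (hxij 1 3)
    rw [T3_apply]
    calc |(x 2 0 + x 2 1) * (x 0 0 * (x 1 0 + x 1 1) + x 0 1 * (x 1 0 - x 1 1))
          + (x 2 0 - x 2 1) * (x 0 2 * (x 1 2 + x 1 3) + x 0 3 * (x 1 2 - x 1 3))|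
        ≤ |(x 2 0 + x 2 1) * (x 0 0 * (x 1 0 + x 1 1) + x 0 1 * (x 1 0 - x 1 1))|
          + |(x 2 0 - x 2 1) * (x 0 2 * (x 1 2 + x 1 3) + x 0 3 * (x 1 2 - x 1 3))| :=
          abs_add_le _ _
      _ = |x 2 0 + x 2 1| * |x 0 0 * (x 1 0 + x 1 1) + x 0 1 * (x 1 0 - x 1 1)|
          + |x 2 0 - x 2 1| * |x 0 2 * (x 1 2 + x 1 3) + x 0 3 * (x 1 2 - x 1 3)| := by
          rw [abs_mul, abs_mul]
      _ ≤ |x 2 0 + x 2 1| * 2 + |x 2 0 - x 2 1| * 2 := by gcongr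
      _ = (|x 2 0 + x 2 1| + |x 2 0 - x 2 1|) * 2 := by ring
      _ ≤ 2 * 2 := by
          have := pm2 _ _ (hxij 2 0) (hxij 2 1)
          nlinarith
      _ = 4 := by norm_num
  have hbdd : BddAbove {v : ℝ | ∃ x : Fin 3 → Fin 4 → ℝ, (∀ i, ‖x i‖ ≤ 1) ∧ v = |T3 x|} := by
    refine ⟨4, ?_⟩
    rintro v ⟨x, hx, rfl⟩
    exact hbound x hx
  have hs_le : supNorm 3 4 T3 ≤ 4 := by
    apply Real.sSup_le
    · rintro v ⟨x, hx, rfl⟩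
      exact hbound x hx
    · norm_num
  have hs0 : 0 ≤ supNorm 3 4 T3 := by
    apply le_csSup hbdd
    refine ⟨fun _ => 0, fun i => by simp, ?_⟩
    have : T3 (fun _ => 0) = 0 := T3.map_coord_zero (m := fun _ => 0) 0 rfl
    rw [this, abs_zero]
  -- compute the mixed-norm sum
  have hin : ∀ a b : Fin 4, (∑ j₃ : Fin 4, |T3 ![e 4 a, e 4 b, e 4 j₃]| ^ γ)
      = (if (a = 0 ∨ a = 1) ∧ (b = 0 ∨ b = 1) ∨ (a = 2 ∨ a = 3) ∧ (b = 2 ∨ b = 3)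
          then 2 else 0) := by
    intro a b
    rw [Fin.sum_univ_four]
    simp only [T3_basis]
    by_cases h : (a = 0 ∨ a = 1) ∧ (b = 0 ∨ b = 1) ∨ (a = 2 ∨ a = 3) ∧ (b = 2 ∨ b = 3)
    · simp [h, Real.one_rpow, Real.zero_rpow hγne]
      norm_num
    · simp [h, Real.zero_rpow hγne]
  have hmid : ∀ a : Fin 4,
      (∑ j₂ : Fin 4, (∑ j₃ : Fin 4, |T3 ![e 4 a, e 4 j₂, e 4 j₃]| ^ γ) ^ (β / γ))
        = 2 * (2:ℝ) ^ (β / γ) := by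
    intro a
    rw [Fin.sum_univ_four, hin a 0, hin a 1, hin a 2, hin a 3]
    fin_cases a <;> simp [Real.zero_rpow hβγne] <;> ring
  have key := hC 4 T3
  simp only [hmid] at key
  rw [Finset.sum_const, Finset.card_univ, Fintype.card_fin, nsmul_eq_mul] at key
  -- rewrite the value as a power of two
  have h2pos : (0:ℝ) < 2 := two_pos
  have hval : ((4:ℕ) * (2 * (2:ℝ) ^ (β / γ)) ^ (α / β)) ^ (1 / α)
      = (2:ℝ) ^ ((2 + (1 + β / γ) * (α / β)) * (1 / α)) := by
    have h1 : (2 : ℝ) * (2:ℝ) ^ (β / γ) = (2:ℝ) ^ (1 + β / γ) := by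
      rw [Real.rpow_add h2pos, Real.rpow_one]
    have h2 : ((4:ℕ) : ℝ) = (2:ℝ) ^ (2:ℝ) := by
      rw [show ((2:ℝ):ℝ) = ((2:ℕ):ℝ) by norm_num, Real.rpow_natCast]; norm_num
    rw [h1, h2, ← Real.rpow_mul (le_of_lt h2pos), ← Real.rpow_add h2pos,
      ← Real.rpow_mul (le_of_lt h2pos)]
  rw [hval] at key
  set E : ℝ := (2 + (1 + β / γ) * (α / β)) * (1 / α) with hE
  have hEpos : (0:ℝ) < (2:ℝ) ^ E := Real.rpow_pos_of_pos h2pos E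
  have hCpos : 0 < C := by
    by_contra hc
    push_neg at hc
    nlinarith [key, hs0, hEpos]
  have key4 : (2:ℝ) ^ E ≤ C * 4 := by
    calc (2:ℝ) ^ E ≤ C * supNorm 3 4 T3 := key
      _ ≤ C * 4 := by
        exact mul_le_mul_of_nonneg_left hs_le (le_of_lt hCpos)
  have hEE : (2*β*γ + α*β + α*γ - 2*α*β*γ) / (α*β*γ) = E - 2 := by
    rw [hE]
    field_simp
    ring
  rw [hEE, Real.rpow_sub h2pos]
  rw [show ((2:ℝ) ^ (2:ℝ)) = 4 by
    rw [show ((2:ℝ):ℝ) = ((2:ℕ):ℝ) by norm_num, Real.rpow_natCast]; norm_num]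
  rw [div_le_iff₀ (by norm_num : (0:ℝ) < 4)]
  linarith
end

section
/- For any finitely supported nonnegative doubly-indexed array (a_{ij}) and exponents with 1/q = θ/r + (1-θ)/s coordinatewise for mixed norms q = (q₁,q₂), r = (r₁,r₂), s = (s₁,s₂) in [1,∞)², the mixed norm satisfies ‖a‖_{(q₁,q₂)} ≤ ‖a‖_{(r₁,r₂)}^θ · ‖a‖_{(s₁,s₂)}^{1-θ}, where ‖a‖_{(p₁,p₂)} = (Σᵢ(Σⱼ a_{ij}^{p₂})^{p₁/p₂})^{1/p₁}. -/
open Finset in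
/-- Two-function Hölder interpolation for finite sums. -/
lemma holder_interp {n : ℕ} (g h : Fin n → ℝ) (hg : ∀ i, 0 ≤ g i) (hh : ∀ i, 0 ≤ h i)
    (θ q r s : ℝ) (hθ0 : 0 < θ) (hθ1 : θ < 1) (hq : 0 < q) (hr : 0 < r) (hs : 0 < s)
    (hrel : 1 / q = θ / r + (1 - θ) / s) :
    ∑ i, g i ^ (θ * q) * h i ^ ((1 - θ) * q)
      ≤ (∑ i, g i ^ r) ^ (θ * q / r) * (∑ i, h i ^ s) ^ ((1 - θ) * q / s) := by
  set p₁ : ℝ := r / (θ * q) with hp₁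
  set p₂ : ℝ := s / ((1 - θ) * q) with hp₂
  have hθq : 0 < θ * q := by positivity
  have h1θq : 0 < (1 - θ) * q := by nlinarith
  have hinv1 : 1 / p₁ = θ * q / r := by rw [hp₁]; field_simp
  have hinv2 : 1 / p₂ = (1 - θ) * q / s := by rw [hp₂]; field_simp
  have hsum : 1 / p₁ + 1 / p₂ = 1 := by
    rw [hinv1, hinv2]
    have hq' : q ≠ 0 := ne_of_gt hq
    field_simp at hrel ⊢
    nlinarith [hrel]
  have hp₁pos : 0 < p₁ := by rw [hp₁]; positivity
  have hp₁gt : 1 < p₁ := by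
    have h2pos : 0 < 1 / p₂ := by rw [hinv2]; positivity
    have : 1 / p₁ < 1 := by linarith
    rw [div_lt_one hp₁pos] at this; linarith [this]
  have hconj : p₁.HolderConjugate p₂ := Real.holderConjugate_iff.mpr ⟨hp₁gt, by simpa using hsum⟩
  have e1 : θ * q * p₁ = r := by rw [hp₁]; field_simp
  have e2 : (1 - θ) * q * p₂ = s := by rw [hp₂]; field_simp; exact div_self (by linarith)
  calc ∑ i, g i ^ (θ * q) * h i ^ ((1 - θ) * q)
      ≤ (∑ i, (g i ^ (θ * q)) ^ p₁) ^ (1 / p₁) * (∑ i, (h i ^ ((1 - θ) * q)) ^ p₂) ^ (1 / p₂) :=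
        Real.inner_le_Lp_mul_Lq_of_nonneg _ hconj (fun i _ => Real.rpow_nonneg (hg i) _)
          (fun i _ => Real.rpow_nonneg (hh i) _)
    _ = (∑ i, g i ^ r) ^ (θ * q / r) * (∑ i, h i ^ s) ^ ((1 - θ) * q / s) := by
        rw [hinv1, hinv2]
        congr 2 <;> apply Finset.sum_congr rfl <;> intro i _
        · rw [← Real.rpow_mul (hg i), e1]
        · rw [← Real.rpow_mul (hh i), e2]


/-- Two-index mixed-norm interpolation: for a nonnegative array `a` and mixed
exponents `q = (q₁,q₂)`, `r = (r₁,r₂)`, `s = (s₁,s₂)` in `[1,∞)²` with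
`1/qᵢ = θ/rᵢ + (1-θ)/sᵢ`, one has
`‖a‖_{(q₁,q₂)} ≤ ‖a‖_{(r₁,r₂)}^θ · ‖a‖_{(s₁,s₂)}^{1-θ}`, where
`‖a‖_{(p₁,p₂)} = (Σᵢ(Σⱼ aᵢⱼ^{p₂})^{p₁/p₂})^{1/p₁}`. -/
theorem stmt_19 (I J : ℕ) (a : Fin I → Fin J → ℝ) (ha : ∀ i j, 0 ≤ a i j)
    (θ : ℝ) (hθ : θ ∈ Set.Icc (0:ℝ) 1)
    (q₁ q₂ r₁ r₂ s₁ s₂ : ℝ)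
    (hq₁ : 1 ≤ q₁) (hq₂ : 1 ≤ q₂) (hr₁ : 1 ≤ r₁) (hr₂ : 1 ≤ r₂)
    (hs₁ : 1 ≤ s₁) (hs₂ : 1 ≤ s₂)
    (h1 : 1 / q₁ = θ / r₁ + (1 - θ) / s₁)
    (h2 : 1 / q₂ = θ / r₂ + (1 - θ) / s₂) :
    (∑ i, (∑ j, a i j ^ q₂) ^ (q₁ / q₂)) ^ (1 / q₁)
      ≤ ((∑ i, (∑ j, a i j ^ r₂) ^ (r₁ / r₂)) ^ (1 / r₁)) ^ θ
          * ((∑ i, (∑ j, a i j ^ s₂) ^ (s₁ / s₂)) ^ (1 / s₁)) ^ (1 - θ) := by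
  obtain ⟨hθ0, hθ1⟩ := hθ
  have hq₁0 : (0:ℝ) < q₁ := lt_of_lt_of_le one_pos hq₁
  have hq₂0 : (0:ℝ) < q₂ := lt_of_lt_of_le one_pos hq₂
  have hr₁0 : (0:ℝ) < r₁ := lt_of_lt_of_le one_pos hr₁
  have hr₂0 : (0:ℝ) < r₂ := lt_of_lt_of_le one_pos hr₂
  have hs₁0 : (0:ℝ) < s₁ := lt_of_lt_of_le one_pos hs₁
  have hs₂0 : (0:ℝ) < s₂ := lt_of_lt_of_le one_pos hs₂
  -- Degenerate endpoints
  rcases eq_or_lt_of_le hθ0 with hθe | hθpos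
  · -- θ = 0
    have hθ' : θ = 0 := hθe.symm
    subst hθ'
    have e1 : q₁ = s₁ := by
      rw [zero_div, zero_add, sub_zero, div_eq_div_iff hq₁0.ne' hs₁0.ne'] at h1; linarith
    have e2 : q₂ = s₂ := by
      rw [zero_div, zero_add, sub_zero, div_eq_div_iff hq₂0.ne' hs₂0.ne'] at h2; linarith
    subst e1; subst e2
    simp [Real.rpow_zero, Real.rpow_one]
  rcases eq_or_lt_of_le hθ1 with hθe | hθlt
  · -- θ = 1
    subst hθe
    have e1 : q₁ = r₁ := by
      rw [sub_self, zero_div, add_zero, div_eq_div_iff hq₁0.ne' hr₁0.ne'] at h1; linarith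
    have e2 : q₂ = r₂ := by
      rw [sub_self, zero_div, add_zero, div_eq_div_iff hq₂0.ne' hr₂0.ne'] at h2; linarith
    subst e1; subst e2
    simp [Real.rpow_zero, Real.rpow_one]
  -- Main case 0 < θ < 1
  set g : Fin I → ℝ := fun i => ∑ j, a i j ^ r₂ with hgdef
  set h : Fin I → ℝ := fun i => ∑ j, a i j ^ s₂ with hhdef
  have hgnn : ∀ i, 0 ≤ g i := fun i => Finset.sum_nonneg fun j _ => Real.rpow_nonneg (ha i j) _
  have hhnn : ∀ i, 0 ≤ h i := fun i => Finset.sum_nonneg fun j _ => Real.rpow_nonneg (ha i j) _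
  -- inner step
  have inner : ∀ i, (∑ j, a i j ^ q₂) ^ (q₁ / q₂)
      ≤ (g i ^ (1 / r₂)) ^ (θ * q₁) * (h i ^ (1 / s₂)) ^ ((1 - θ) * q₁) := by
    intro i
    have H := holder_interp (fun j => a i j) (fun j => a i j) (ha i) (ha i)
      θ q₂ r₂ s₂ hθpos hθlt hq₂0 hr₂0 hs₂0 h2
    have Hl : (∑ j, a i j ^ q₂) = ∑ j, a i j ^ (θ * q₂) * a i j ^ ((1 - θ) * q₂) := by
      apply Finset.sum_congr rfl; intro j _
      rw [← Real.rpow_add' (ha i j) (by rw [show θ*q₂+(1-θ)*q₂ = q₂ by ring]; positivity)]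
      ring_nf
    rw [Hl]
    calc (∑ j, a i j ^ (θ * q₂) * a i j ^ ((1 - θ) * q₂)) ^ (q₁ / q₂)
        ≤ (g i ^ (θ * q₂ / r₂) * h i ^ ((1 - θ) * q₂ / s₂)) ^ (q₁ / q₂) := by
          apply Real.rpow_le_rpow (Finset.sum_nonneg fun j _ => by
            exact mul_nonneg (Real.rpow_nonneg (ha i j) _) (Real.rpow_nonneg (ha i j) _)) H
          positivity
      _ = (g i ^ (1 / r₂)) ^ (θ * q₁) * (h i ^ (1 / s₂)) ^ ((1 - θ) * q₁) := by
          rw [Real.mul_rpow (Real.rpow_nonneg (hgnn i) _) (Real.rpow_nonneg (hhnn i) _),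
            ← Real.rpow_mul (hgnn i), ← Real.rpow_mul (hhnn i),
            ← Real.rpow_mul (hgnn i), ← Real.rpow_mul (hhnn i)]
          congr 2 <;> field_simp <;> ring
  -- outer step
  have outer := holder_interp (fun i => g i ^ (1 / r₂)) (fun i => h i ^ (1 / s₂))
    (fun i => Real.rpow_nonneg (hgnn i) _) (fun i => Real.rpow_nonneg (hhnn i) _)
    θ q₁ r₁ s₁ hθpos hθlt hq₁0 hr₁0 hs₁0 h1
  have outer' : (∑ i, (∑ j, a i j ^ q₂) ^ (q₁ / q₂))
      ≤ (∑ i, g i ^ (r₁ / r₂)) ^ (θ * q₁ / r₁) * (∑ i, h i ^ (s₁ / s₂)) ^ ((1 - θ) * q₁ / s₁) := by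
    calc (∑ i, (∑ j, a i j ^ q₂) ^ (q₁ / q₂))
        ≤ ∑ i, (g i ^ (1 / r₂)) ^ (θ * q₁) * (h i ^ (1 / s₂)) ^ ((1 - θ) * q₁) :=
          Finset.sum_le_sum fun i _ => inner i
      _ ≤ (∑ i, (g i ^ (1 / r₂)) ^ r₁) ^ (θ * q₁ / r₁)
            * (∑ i, (h i ^ (1 / s₂)) ^ s₁) ^ ((1 - θ) * q₁ / s₁) := outer
      _ = (∑ i, g i ^ (r₁ / r₂)) ^ (θ * q₁ / r₁)
            * (∑ i, h i ^ (s₁ / s₂)) ^ ((1 - θ) * q₁ / s₁) := by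
          congr 2 <;> apply Finset.sum_congr rfl <;> intro i _
          · rw [← Real.rpow_mul (hgnn i), one_div_mul_eq_div]
          · rw [← Real.rpow_mul (hhnn i)]; congr 1; field_simp
  -- final rpow
  have final := Real.rpow_le_rpow
    (Finset.sum_nonneg fun i _ => Real.rpow_nonneg
      (Finset.sum_nonneg fun j _ => Real.rpow_nonneg (ha i j) _) _)
    outer' (le_of_lt (by positivity : (0:ℝ) < 1 / q₁))
  refine final.trans_eq ?_
  have hRnn : 0 ≤ ∑ i, g i ^ (r₁ / r₂) :=
    Finset.sum_nonneg fun i _ => Real.rpow_nonneg (hgnn i) _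
  have hTnn : 0 ≤ ∑ i, h i ^ (s₁ / s₂) :=
    Finset.sum_nonneg fun i _ => Real.rpow_nonneg (hhnn i) _
  rw [Real.mul_rpow (Real.rpow_nonneg hRnn _) (Real.rpow_nonneg hTnn _),
    ← Real.rpow_mul hRnn, ← Real.rpow_mul hTnn,
    ← Real.rpow_mul hRnn, ← Real.rpow_mul hTnn]
  congr 2 <;> field_simp <;> ring
end
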